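/- arXiv:2510.10598 — 4 statements merged into one kernel-verified Lean document; each statement's English description precedes it below -/
import Mathlib

section
/- For 0 < t < 1, the sum ∑_{n≥1} (2n-1) t^{2n-1}/(1 + t^{2n-1}), with ρ := -log t, equals π²/(24 ρ²) + O(1/ρ) as ρ → 0⁺. -/
open Real

open Finset Filter Topology

noncomputable def gcf (s : ℝ) : ℝ := Real.cosh s / (2 * Real.sinh s ^ 2)

lemma one_lt_exp' {s : ℝ} (hs : 0 < s) : 1 < Real.exp s := by
  have := Real.add_one_le_exp s; linarith

lemma sinh_pos' {s : ℝ} (hs : 0 < s) : 0 < Real.sinh s := by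
  rw [Real.sinh_eq]
  have h1 : 1 < Real.exp s := one_lt_exp' hs
  have h2 : Real.exp (-s) < 1 := Real.exp_lt_one_iff.mpr (by linarith)
  have h3 : 0 < Real.exp (-s) := Real.exp_pos _
  linarith

lemma gcf_eq {s : ℝ} (hs : 0 < s) :
    gcf s = Real.exp (-s) * (2 * (Real.exp (-s) ^ 2 / (1 - Real.exp (-s) ^ 2) ^ 2)
      + (1 - Real.exp (-s) ^ 2)⁻¹) := by
  have hE : 1 < Real.exp s := one_lt_exp' hs
  have hE0 : (0:ℝ) < Real.exp s := by linarith
  have hE0' : Real.exp s ≠ 0 := hE0.ne'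
  have hx : Real.exp (-s) = (Real.exp s)⁻¹ := Real.exp_neg s
  have hE2 : Real.exp s ^ 2 - 1 ≠ 0 := by nlinarith
  have hs1 : Real.sinh s ≠ 0 := (sinh_pos' hs).ne'
  have hy : (Real.exp s)⁻¹ * Real.exp s = 1 := inv_mul_cancel₀ hE0'
  have hyp : 0 < (Real.exp s)⁻¹ := inv_pos.mpr hE0
  have h2' : (0:ℝ) < 1 - ((Real.exp s)⁻¹) ^ 2 := by nlinarith
  have h2 : (1 : ℝ) - ((Real.exp s)⁻¹) ^ 2 ≠ 0 := h2'.ne'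
  have lhs : gcf s = Real.exp s * (Real.exp s ^ 2 + 1) / (Real.exp s ^ 2 - 1) ^ 2 := by
    rw [gcf, Real.cosh_eq, Real.sinh_eq, hx]
    have h3 : Real.exp s - (Real.exp s)⁻¹ ≠ 0 := by
      rw [Real.sinh_eq, hx] at hs1
      intro h; apply hs1; rw [h]; simp
    rw [div_eq_div_iff (by positivity) (by positivity)]
    field_simp
  rw [lhs, hx]
  rw [eq_comm]
  field_simp
  ring

lemma hasSum_gcf {s : ℝ} (hs : 0 < s) :
    HasSum (fun n : ℕ => (2 * (n:ℝ) + 1) * Real.exp (-(2 * (n:ℝ) + 1) * s)) (gcf s) := by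
  set x : ℝ := Real.exp (-s) with hxdef
  have hx0 : 0 < x := Real.exp_pos _
  have hx1 : x < 1 := Real.exp_lt_one_iff.mpr (by linarith)
  have hy1 : ‖x ^ 2‖ < 1 := by
    rw [Real.norm_eq_abs, abs_of_pos (by positivity)]; nlinarith
  have h1 : HasSum (fun n : ℕ => (n : ℝ) * (x ^ 2) ^ n) (x ^ 2 / (1 - x ^ 2) ^ 2) :=
    hasSum_coe_mul_geometric_of_norm_lt_one hy1
  have h2 : HasSum (fun n : ℕ => (x ^ 2) ^ n) ((1 - x ^ 2)⁻¹) :=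
    hasSum_geometric_of_norm_lt_one hy1
  have h3 := ((h1.mul_left 2).add h2).mul_left x
  have key : ∀ n : ℕ, x * (2 * ((n : ℝ) * (x ^ 2) ^ n) + (x ^ 2) ^ n)
      = (2 * (n:ℝ) + 1) * Real.exp (-(2 * (n:ℝ) + 1) * s) := by
    intro n
    have : Real.exp (-(2 * (n:ℝ) + 1) * s) = x ^ (2 * n + 1) := by
      rw [hxdef, ← Real.exp_nat_mul]
      congr 1
      push_cast
      ring
    rw [this]
    ring
  rw [funext key] at h3
  rwa [gcf_eq hs]

lemma taylor_bounds {s : ℝ} (h0 : 0 ≤ s) (h1 : s ≤ 1) :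
    |Real.cosh s - (1 + s^2/2)| ≤ 5*s^4/96 ∧ |Real.sinh s - (s + s^3/6)| ≤ 5*s^4/96 := by
  have habs : |s| ≤ 1 := by rw [abs_of_nonneg h0]; exact h1
  have habs' : |(-s)| ≤ 1 := by rwa [abs_neg]
  have e1 := Real.exp_bound habs (n := 4) (by norm_num)
  have e2 := Real.exp_bound habs' (n := 4) (by norm_num)
  have hs4 : |s|^4 = s^4 := by rw [← abs_pow, abs_of_nonneg (by positivity)]
  have hs4' : |(-s)|^4 = s^4 := by rw [abs_neg, hs4]
  rw [hs4] at e1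
  rw [hs4'] at e2
  have hsum1 : ∑ m ∈ range 4, s ^ m / (Nat.factorial m) = 1 + s + s^2/2 + s^3/6 := by
    simp [Finset.sum_range_succ, Nat.factorial]
    try ring
  have hsum2 : ∑ m ∈ range 4, (-s) ^ m / (Nat.factorial m) = 1 - s + s^2/2 - s^3/6 := by
    simp [Finset.sum_range_succ, Nat.factorial]
    try ring
  rw [hsum1] at e1
  rw [hsum2] at e2
  norm_num [Nat.factorial] at e1 e2
  rw [abs_le] at e1 e2
  constructor
  · rw [Real.cosh_eq, abs_le]; constructor <;> nlinarith [e1.1, e1.2, e2.1, e2.2]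
  · rw [Real.sinh_eq, abs_le]; constructor <;> nlinarith [e1.1, e1.2, e2.1, e2.2]

lemma num_bound {s : ℝ} (h0 : 0 < s) (h1 : s ≤ 1) :
    |s^2 * Real.cosh s - Real.sinh s ^ 2| ≤ s^4 ∧ s ≤ Real.sinh s := by
  obtain ⟨hc, hh⟩ := taylor_bounds h0.le h1
  rw [abs_le] at hc hh
  have hsle : s ≤ Real.sinh s := by nlinarith [hh.1, hh.2, pow_le_one₀ h0.le h1 (n:=4)]
  refine ⟨abs_le.mpr ⟨?_, ?_⟩, hsle⟩
  · nlinarith [hc.1, hc.2, hh.1, hh.2, sq_nonneg s, sq_nonneg (s^2), h0.le,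
      pow_le_one₀ h0.le h1 (n:=2), pow_le_one₀ h0.le h1 (n:=4), sq_nonneg (s - s^2)]
  · nlinarith [hc.1, hc.2, hh.1, hh.2, sq_nonneg s, sq_nonneg (s^2), h0.le,
      pow_le_one₀ h0.le h1 (n:=2), pow_le_one₀ h0.le h1 (n:=4), sq_nonneg (s - s^2)]

lemma bound_small {s : ℝ} (h0 : 0 < s) (h1 : s ≤ 1) :
    |gcf s - 1/(2*s^2)| ≤ 1/2 := by
  obtain ⟨hnum, hsle⟩ := num_bound h0 h1
  have hsh : 0 < Real.sinh s := sinh_pos' h0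
  have heq : gcf s - 1/(2*s^2)
      = (s^2 * Real.cosh s - Real.sinh s ^ 2)/(2 * s^2 * Real.sinh s ^ 2) := by
    rw [gcf]; field_simp
  have hd : 0 < 2*s^2*Real.sinh s^2 :=
    mul_pos (by positivity) (pow_pos hsh 2)
  rw [heq, abs_div, abs_of_pos hd, div_le_iff₀ hd]
  have h2 : s^2 ≤ Real.sinh s ^ 2 := by nlinarith
  nlinarith [hnum, h2, sq_nonneg s, h0]

lemma bound_large {s : ℝ} (h1 : 1 ≤ s) : gcf s ≤ 4 * Real.exp (-s) := by
  have hE : 2 ≤ Real.exp s := by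
    calc (2:ℝ) ≤ Real.exp 1 := by
          have := Real.exp_one_gt_d9; linarith
    _ ≤ Real.exp s := Real.exp_le_exp.mpr h1
  have hb : 0 < Real.exp (-s) := Real.exp_pos _
  have hab : Real.exp (-s) * Real.exp s = 1 := by
    rw [← Real.exp_add]; simp
  have hsh : 0 < Real.sinh s := sinh_pos' (by linarith)
  rw [gcf, div_le_iff₀ (by positivity), Real.cosh_eq, Real.sinh_eq]
  nlinarith [sq_nonneg (Real.exp s - 2), sq_nonneg (Real.exp s), hb, hE,
    mul_pos hb hb, sq_nonneg (Real.exp s * Real.exp (-s) - 1)]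

lemma gcf_pos {s : ℝ} (hs : 0 < s) : 0 < gcf s := by
  have := sinh_pos' hs
  have := Real.cosh_pos s
  rw [gcf]; positivity

lemma master_bound {s : ℝ} (hs : 0 < s) :
    |gcf s - 1/(2*s^2)| ≤ 4 * Real.exp (-s) + (if 1 < s then 1/(2*s^2) else 0) := by
  by_cases h : 1 < s
  · rw [if_pos h]
    have h1 : |gcf s - 1/(2*s^2)| ≤ gcf s + 1/(2*s^2) := by
      have := gcf_pos hs
      have : (0:ℝ) < 1/(2*s^2) := by positivity
      rw [abs_sub_comm]
      calc |1/(2*s^2) - gcf s| ≤ |1/(2*s^2)| + |gcf s| := abs_sub _ _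
        _ = 1/(2*s^2) + gcf s := by
            rw [abs_of_pos (by positivity), abs_of_pos (gcf_pos hs)]
        _ = gcf s + 1/(2*s^2) := by ring
    have h2 := bound_large h.le
    linarith
  · rw [if_neg h]
    push_neg at h
    have h1 := bound_small hs h
    have h2 : Real.exp (-1) ≤ Real.exp (-s) := Real.exp_le_exp.mpr (by linarith)
    have h3 : (1:ℝ)/3 ≤ Real.exp (-1) := by
      rw [Real.exp_neg]
      rw [le_inv_comm₀ (by norm_num) (Real.exp_pos 1)]
      have := Real.exp_one_lt_d9; linarith
    linarith

lemma hasSum_shift : HasSum (fun n : ℕ => 1/((n:ℝ)+1)^2) (π^2/6) := by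
  have h0 : HasSum (fun n : ℕ => 1/(n:ℝ)^2) (π^2/6) := hasSum_zeta_two
  have h1 := (hasSum_nat_add_iff' (f := fun n : ℕ => 1/(n:ℝ)^2) 1).mpr h0
  simp only [Finset.sum_range_one, Nat.cast_zero] at h1
  norm_num at h1
  convert h1 using 2 with n
  rfl
  push_cast
  ring

lemma hasSum_eta2 : HasSum (fun k : ℕ => (-1:ℝ)^k * (1/((k:ℝ)+1)^2)) (π^2/12) := by
  have hshift := hasSum_shift
  have hodd : HasSum (fun k : ℕ => 1/((2*(k:ℝ)+1)+1)^2) (π^2/24) := by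
    have h := hshift.mul_left (1/4 : ℝ)
    have hf : (fun k : ℕ => (1/4 : ℝ) * (1/((k:ℝ)+1)^2))
        = fun k : ℕ => 1/((2*(k:ℝ)+1)+1)^2 := by
      funext k; field_simp; ring
    rw [hf] at h
    convert h using 1
    rfl
    ring
  have heven_summable : Summable (fun k : ℕ => 1/((2*(k:ℝ))+1)^2) := by
    apply Summable.of_nonneg_of_le (fun k => by positivity)
      (fun k => ?_) hshift.summable
    apply div_le_div_of_nonneg_left (by norm_num) (by positivity)
    nlinarith [sq_nonneg ((k:ℝ)), Nat.cast_nonneg (α := ℝ) k]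
  set E : ℝ := ∑' k : ℕ, 1/((2*(k:ℝ))+1)^2 with hEdef
  have hE : HasSum (fun k : ℕ => 1/((2*(k:ℝ))+1)^2) E := heven_summable.hasSum
  have htotal : HasSum (fun n : ℕ => 1/((n:ℝ)+1)^2) (E + π^2/24) := by
    apply HasSum.even_add_odd
    · have hf : (fun k : ℕ => 1/(((2*k:ℕ):ℝ)+1)^2) = fun k : ℕ => 1/((2*(k:ℝ))+1)^2 := by
        funext k; push_cast; ring
      exact hf ▸ hE
    · have hf : (fun k : ℕ => 1/(((2*k+1:ℕ):ℝ)+1)^2)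
          = fun k : ℕ => 1/((2*(k:ℝ)+1)+1)^2 := by
        funext k; push_cast; ring
      exact hf ▸ hodd
  have hEval : E = π^2/8 := by
    have := htotal.unique hshift
    linarith
  have halt : HasSum (fun k : ℕ => (-1:ℝ)^k * (1/((k:ℝ)+1)^2)) (E - π^2/24) := by
    rw [show E - π^2/24 = E + -(π^2/24) by ring]
    apply HasSum.even_add_odd
    · have hf : (fun k : ℕ => (-1:ℝ)^(2*k) * (1/(((2*k:ℕ):ℝ)+1)^2))
          = fun k : ℕ => 1/((2*(k:ℝ))+1)^2 := by
        funext k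
        rw [pow_mul]
        push_cast
        norm_num
      exact hf ▸ hE
    · have hf : (fun k : ℕ => (-1:ℝ)^(2*k+1) * (1/(((2*k+1:ℕ):ℝ)+1)^2))
          = fun k : ℕ => -(1/((2*(k:ℝ)+1)+1)^2) := by
        funext k
        rw [pow_succ, pow_mul]
        push_cast
        norm_num
      exact hf ▸ hodd.neg
  rw [hEval] at halt
  convert halt using 1
  ring

lemma alt_geom {x : ℝ} (h0 : 0 < x) (h1 : x < 1) :
    HasSum (fun k : ℕ => (-1:ℝ)^k * x^(k+1)) (x/(1+x)) := by
  have h : ‖(-x)‖ < 1 := by rw [norm_neg, Real.norm_eq_abs, abs_of_pos h0]; exact h1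
  have := (hasSum_geometric_of_norm_lt_one h).mul_left x
  have hf : (fun k : ℕ => x * (-x)^k) = fun k : ℕ => (-1:ℝ)^k * x^(k+1) := by
    funext k
    rw [neg_pow]
    ring
  rw [hf] at this
  convert this using 1
  rfl
  rw [sub_neg_eq_add, div_eq_mul_inv]

lemma key_identity {ρ : ℝ} (hρ : 0 < ρ) :
    (∑' n : ℕ, (2 * (n:ℝ) + 1) * Real.exp (-(2 * (n:ℝ) + 1) * ρ) /
        (1 + Real.exp (-(2 * (n:ℝ) + 1) * ρ)))
      = ∑' k : ℕ, (-1:ℝ)^k * gcf (((k:ℝ)+1)*ρ) := by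
  set f : ℕ → ℕ → ℝ := fun n k =>
    (-1:ℝ)^k * ((2 * (n:ℝ) + 1) * Real.exp (-(2 * (n:ℝ) + 1) * (((k:ℝ)+1)*ρ))) with hfdef
  have hx : ∀ n : ℕ, 0 < Real.exp (-(2 * (n:ℝ) + 1) * ρ) ∧
      Real.exp (-(2 * (n:ℝ) + 1) * ρ) < 1 := by
    intro n
    refine ⟨Real.exp_pos _, Real.exp_lt_one_iff.mpr ?_⟩
    have : (0:ℝ) ≤ (n:ℝ) := Nat.cast_nonneg n
    nlinarith
  have hpow : ∀ n k : ℕ, Real.exp (-(2 * (n:ℝ) + 1) * (((k:ℝ)+1)*ρ))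
      = (Real.exp (-(2 * (n:ℝ) + 1) * ρ)) ^ (k+1) := by
    intro n k
    rw [← Real.exp_nat_mul]
    congr 1
    push_cast
    ring
  -- row sums
  have hrow : ∀ n : ℕ, HasSum (fun k => f n k)
      ((2 * (n:ℝ) + 1) * Real.exp (-(2 * (n:ℝ) + 1) * ρ) /
        (1 + Real.exp (-(2 * (n:ℝ) + 1) * ρ))) := by
    intro n
    obtain ⟨h0, h1⟩ := hx n
    have := (alt_geom h0 h1).mul_left (2 * (n:ℝ) + 1)
    have hf2 : (fun k : ℕ => (2 * (n:ℝ) + 1) * ((-1:ℝ)^k * (Real.exp (-(2 * (n:ℝ) + 1) * ρ))^(k+1)))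
        = fun k => f n k := by
      funext k
      rw [hfdef]
      dsimp only
      rw [hpow n k]
      ring
    rw [hf2] at this
    convert this using 1
    rfl
    ring
  -- column sums
  have hcol : ∀ k : ℕ, HasSum (fun n => f n k) ((-1:ℝ)^k * gcf (((k:ℝ)+1)*ρ)) := by
    intro k
    have hs : 0 < ((k:ℝ)+1)*ρ := by positivity
    exact (hasSum_gcf hs).mul_left ((-1:ℝ)^k)
  -- absolute row sums
  have hrowabs : ∀ n : ℕ, HasSum (fun k : ℕ => |Function.uncurry f (n, k)|)
      ((2 * (n:ℝ) + 1) * Real.exp (-(2 * (n:ℝ) + 1) * ρ) *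
        (1 - Real.exp (-(2 * (n:ℝ) + 1) * ρ))⁻¹) := by
    intro n
    obtain ⟨h0, h1⟩ := hx n
    have hgeo := (hasSum_geometric_of_lt_one h0.le h1).mul_left
      ((2 * (n:ℝ) + 1) * Real.exp (-(2 * (n:ℝ) + 1) * ρ))
    have hf2 : (fun k : ℕ => (2 * (n:ℝ) + 1) * Real.exp (-(2 * (n:ℝ) + 1) * ρ)
          * (Real.exp (-(2 * (n:ℝ) + 1) * ρ))^k)
        = fun k : ℕ => |Function.uncurry f (n, k)| := by
      funext k
      rw [Function.uncurry]
      dsimp only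
      rw [hfdef]
      dsimp only
      rw [abs_mul, abs_mul, abs_pow, abs_neg, abs_one, one_pow, one_mul, hpow n k,
        abs_of_nonneg (by positivity : (0:ℝ) ≤ 2*(n:ℝ)+1),
        abs_of_nonneg (by positivity : (0:ℝ) ≤ (Real.exp (-(2 * (n:ℝ) + 1) * ρ))^(k+1)),
        pow_succ]
      ring
    rw [hf2] at hgeo
    convert hgeo using 1
    try ring
  -- summability of the double sum
  have habs : Summable (fun p : ℕ × ℕ => |Function.uncurry f p|) := by
    rw [summable_prod_of_nonneg (fun p => abs_nonneg _)]
    refine ⟨fun n => (hrowabs n).summable, ?_⟩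
    have hq1 : Real.exp (-ρ) < 1 := Real.exp_lt_one_iff.mpr (by linarith)
    have hq0 : 0 < 1 - Real.exp (-ρ) := by linarith
    apply Summable.of_nonneg_of_le (fun n => ?_) (fun n => ?_)
      ((((hasSum_gcf hρ).summable).mul_left ((1 - Real.exp (-ρ))⁻¹)))
    · rw [(hrowabs n).tsum_eq]
      obtain ⟨h0, h1⟩ := hx n
      have : 0 < 1 - Real.exp (-(2 * (n:ℝ) + 1) * ρ) := by linarith
      positivity
    · rw [(hrowabs n).tsum_eq]
      obtain ⟨h0, h1⟩ := hx n
      have hle : Real.exp (-(2 * (n:ℝ) + 1) * ρ) ≤ Real.exp (-ρ) := by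
        apply Real.exp_le_exp.mpr
        have : (0:ℝ) ≤ (n:ℝ) := Nat.cast_nonneg n
        nlinarith
      have h2 : 0 < 1 - Real.exp (-(2 * (n:ℝ) + 1) * ρ) := by linarith
      have h3 : (1 - Real.exp (-(2 * (n:ℝ) + 1) * ρ))⁻¹ ≤ (1 - Real.exp (-ρ))⁻¹ := by
        apply inv_anti₀ hq0
        linarith
      have h4 : (0:ℝ) ≤ (2 * (n:ℝ) + 1) * Real.exp (-(2 * (n:ℝ) + 1) * ρ) := by positivity
      calc (2 * (n:ℝ) + 1) * Real.exp (-(2 * (n:ℝ) + 1) * ρ)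
            * (1 - Real.exp (-(2 * (n:ℝ) + 1) * ρ))⁻¹
          ≤ (2 * (n:ℝ) + 1) * Real.exp (-(2 * (n:ℝ) + 1) * ρ) * (1 - Real.exp (-ρ))⁻¹ := by
            exact mul_le_mul_of_nonneg_left h3 h4
        _ = (1 - Real.exp (-ρ))⁻¹ * ((2 * (n:ℝ) + 1) * Real.exp (-(2 * (n:ℝ) + 1) * ρ)) := by
            ring
  have hF : Summable (Function.uncurry f) := summable_abs_iff.mp habs
  calc (∑' n : ℕ, (2 * (n:ℝ) + 1) * Real.exp (-(2 * (n:ℝ) + 1) * ρ) /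
        (1 + Real.exp (-(2 * (n:ℝ) + 1) * ρ)))
      = ∑' (n : ℕ) (k : ℕ), f n k := by
        congr 1
        funext n
        exact (hrow n).tsum_eq.symm
    _ = ∑' (k : ℕ) (n : ℕ), f n k :=
        (Summable.tsum_comm' hF (fun n => (hrow n).summable) (fun k => (hcol k).summable)).symm
    _ = ∑' k : ℕ, (-1:ℝ)^k * gcf (((k:ℝ)+1)*ρ) := by
        congr 1
        funext k
        exact (hcol k).tsum_eq

lemma exp_hasSum {ρ : ℝ} (h0 : 0 < ρ) :
    HasSum (fun k : ℕ => 4 * Real.exp (-(((k:ℝ)+1)*ρ)))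
      (4 * (Real.exp (-ρ) * (1 - Real.exp (-ρ))⁻¹)) := by
  have hq0 : 0 < Real.exp (-ρ) := Real.exp_pos _
  have hq1 : Real.exp (-ρ) < 1 := Real.exp_lt_one_iff.mpr (by linarith)
  have h := (hasSum_geometric_of_lt_one hq0.le hq1).mul_left (4 * Real.exp (-ρ))
  have hf : (fun k : ℕ => 4 * Real.exp (-ρ) * (Real.exp (-ρ))^k)
      = fun k : ℕ => 4 * Real.exp (-(((k:ℝ)+1)*ρ)) := by
    funext k
    have : Real.exp (-(((k:ℝ)+1)*ρ)) = (Real.exp (-ρ))^(k+1) := by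
      rw [← Real.exp_nat_mul]
      congr 1
      push_cast
      ring
    rw [this, pow_succ]
    ring
  rw [hf] at h
  convert h using 1
  rfl
  ring

lemma exp_tsum_bound {ρ : ℝ} (h0 : 0 < ρ) (h1 : ρ ≤ 1) :
    4 * (Real.exp (-ρ) * (1 - Real.exp (-ρ))⁻¹) ≤ 8/ρ := by
  have hq0 : 0 < Real.exp (-ρ) := Real.exp_pos _
  have hq2 : Real.exp (-ρ) ≤ 1 - ρ/2 := by
    have ha := Real.add_one_le_exp ρ
    have hb : Real.exp (-ρ) = (Real.exp ρ)⁻¹ := Real.exp_neg ρ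
    rw [hb]
    have hc : (0:ℝ) < 1 + ρ := by linarith
    have : (Real.exp ρ)⁻¹ ≤ (1+ρ)⁻¹ := by
      apply inv_anti₀ hc
      linarith
    have hd : (1+ρ)⁻¹ ≤ 1 - ρ/2 := by
      rw [inv_le_iff_one_le_mul₀ hc]
      nlinarith
    linarith
  have hd : ρ/2 ≤ 1 - Real.exp (-ρ) := by linarith
  have he : (1 - Real.exp (-ρ))⁻¹ ≤ (ρ/2)⁻¹ := by
    apply inv_anti₀ (by positivity) hd
  have hf : Real.exp (-ρ) * (1 - Real.exp (-ρ))⁻¹ ≤ 1 * (ρ/2)⁻¹ := by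
    apply mul_le_mul (by linarith [Real.exp_lt_one_iff.mpr (show -ρ < 0 by linarith)]) he
      (inv_nonneg.mpr (by linarith)) (by norm_num)
  have : (ρ/2)⁻¹ = 2/ρ := by field_simp
  rw [this] at hf
  rw [div_eq_mul_inv, show (8:ℝ) = 4*2 by norm_num]
  have : 2/ρ = 2 * ρ⁻¹ := by rw [div_eq_mul_inv]
  nlinarith [hf]

lemma G_bound {ρ : ℝ} (h0 : 0 < ρ) (h2 : ρ < 1/2) :
    Summable (fun k : ℕ => if 1 < ((k:ℝ)+1)*ρ then 1/(2*(((k:ℝ)+1)*ρ)^2) else 0) ∧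
    (∑' k : ℕ, if 1 < ((k:ℝ)+1)*ρ then 1/(2*(((k:ℝ)+1)*ρ)^2) else 0) ≤ 1/ρ := by
  set G : ℕ → ℝ := fun k => if 1 < ((k:ℝ)+1)*ρ then 1/(2*(((k:ℝ)+1)*ρ)^2) else 0 with hGdef
  have hGnn : ∀ k, 0 ≤ G k := by
    intro k; rw [hGdef]; dsimp only; split <;> positivity
  have hGle : ∀ k, G k ≤ 1/(2*ρ^2) * (1/((k:ℝ)+1)^2) := by
    intro k; rw [hGdef]; dsimp only
    split
    · apply le_of_eq; field_simp
    · positivity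
  have hGsum : Summable G :=
    Summable.of_nonneg_of_le hGnn hGle ((hasSum_shift.summable).mul_left _)
  refine ⟨hGsum, ?_⟩
  set N : ℕ := ⌈1/ρ⌉₊ with hNdef
  have hN : (1:ℝ)/ρ ≤ (N:ℝ) := Nat.le_ceil _
  have hrho2 : (2:ℝ) < 1/ρ := by
    rw [lt_div_iff₀ h0]; linarith
  have hN2' : (2:ℝ) < (N:ℝ) := lt_of_lt_of_le hrho2 hN
  have hN2 : 2 ≤ N := by exact_mod_cast hN2'.le
  have hNlt : (N:ℝ) < 1/ρ + 1 := Nat.ceil_lt_add_one (by positivity)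
  have hcastN : ((N - 1 : ℕ) : ℝ) = (N:ℝ) - 1 := by
    have h1N : 1 ≤ N := by omega
    rw [Nat.cast_sub h1N, Nat.cast_one]
  have hzero : ∑ i ∈ range (N-1), G i = 0 := by
    apply Finset.sum_eq_zero
    intro i hi
    rw [Finset.mem_range] at hi
    rw [hGdef]
    dsimp only
    rw [if_neg]
    push_neg
    have hi1 : (i:ℝ) + 1 ≤ (N:ℝ) - 1 := by
      have : (i:ℝ) + 1 ≤ ((N-1 : ℕ):ℝ) := by exact_mod_cast Nat.succ_le_of_lt hi
      rw [hcastN] at this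
      exact this
    have : ((i:ℝ)+1) * ρ ≤ ((N:ℝ)-1) * ρ := by nlinarith
    have h3 : ((N:ℝ)-1) * ρ < 1 := by
      have : (N:ℝ) - 1 < 1/ρ := by linarith
      calc ((N:ℝ)-1)*ρ < (1/ρ)*ρ := by
            apply mul_lt_mul_of_pos_right this h0
        _ = 1 := by field_simp
    linarith
  have hsplit := Summable.sum_add_tsum_nat_add (f := G) (N-1) hGsum
  rw [hzero, zero_add] at hsplit
  -- telescoping majorant
  set T : ℕ → ℝ := fun j => 1/(2*ρ^2) * (1/((j:ℝ)+((N:ℝ)-1)) - 1/(((j:ℝ)+1)+((N:ℝ)-1))) with hTdef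
  have hN1pos : (0:ℝ) < (N:ℝ) - 1 := by
    have : (2:ℝ) ≤ (N:ℝ) := by exact_mod_cast hN2
    linarith
  have hTnn : ∀ j : ℕ, 0 ≤ T j := by
    intro j
    rw [hTdef]; dsimp only
    have ha : (0:ℝ) < (j:ℝ) + ((N:ℝ)-1) := by positivity
    have hb : (0:ℝ) < ((j:ℝ)+1) + ((N:ℝ)-1) := by positivity
    have : 1/(((j:ℝ)+1)+((N:ℝ)-1)) ≤ 1/((j:ℝ)+((N:ℝ)-1)) := by
      apply one_div_le_one_div_of_le ha
      linarith
    have : (0:ℝ) ≤ 1/((j:ℝ)+((N:ℝ)-1)) - 1/(((j:ℝ)+1)+((N:ℝ)-1)) := by linarith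
    positivity
  have hTelesc : HasSum (fun j : ℕ => 1/((j:ℝ)+((N:ℝ)-1)) - 1/(((j:ℝ)+1)+((N:ℝ)-1)))
      (1/((N:ℝ)-1)) := by
    rw [hasSum_iff_tendsto_nat_of_nonneg]
    · have hps : ∀ n : ℕ, ∑ i ∈ range n,
          (1/((i:ℝ)+((N:ℝ)-1)) - 1/(((i:ℝ)+1)+((N:ℝ)-1)))
          = 1/((N:ℝ)-1) - 1/((n:ℝ)+((N:ℝ)-1)) := by
        intro n
        have := Finset.sum_range_sub' (f := fun i : ℕ => 1/((i:ℝ)+((N:ℝ)-1))) n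
        rw [show ∑ i ∈ range n, (1/((i:ℝ)+((N:ℝ)-1)) - 1/(((i:ℝ)+1)+((N:ℝ)-1)))
          = ∑ i ∈ range n, (1/((i:ℝ)+((N:ℝ)-1)) - 1/(((i+1:ℕ):ℝ)+((N:ℝ)-1))) from ?_, this]
        · norm_num
        · apply Finset.sum_congr rfl
          intro i _
          push_cast
          ring_nf
      simp only [hps]
      have ht1 : Tendsto (fun n : ℕ => ((n:ℝ) + ((N:ℝ)-1))) atTop atTop :=
        tendsto_atTop_add_const_right _ _ tendsto_natCast_atTop_atTop
      have ht2 : Tendsto (fun n : ℕ => 1/((n:ℝ)+((N:ℝ)-1))) atTop (𝓝 0) := by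
        simpa [one_div, Pi.inv_def] using ht1.inv_tendsto_atTop
      have ht3 : Tendsto (fun n : ℕ => 1/((N:ℝ)-1) - 1/((n:ℝ)+((N:ℝ)-1)))
          atTop (𝓝 (1/((N:ℝ)-1) - 0)) := (tendsto_const_nhds (x := 1/((N:ℝ)-1))).sub ht2
      simpa using ht3
    · intro i
      have ha : (0:ℝ) < (i:ℝ) + ((N:ℝ)-1) := by positivity
      have : 1/(((i:ℝ)+1)+((N:ℝ)-1)) ≤ 1/((i:ℝ)+((N:ℝ)-1)) := by
        apply one_div_le_one_div_of_le ha
        linarith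
      linarith
  have hT : HasSum T (1/(2*ρ^2) * (1/((N:ℝ)-1))) := hTelesc.mul_left _
  have hcomp : ∀ j : ℕ, G (j + (N-1)) ≤ T j := by
    intro j
    have hcast : ((j + (N-1) : ℕ) : ℝ) + 1 = (j:ℝ) + (N:ℝ) := by
      push_cast [hcastN]
      ring
    rw [hGdef, hTdef]
    dsimp only
    rw [hcast]
    have ha : (0:ℝ) < (j:ℝ) + ((N:ℝ)-1) := by positivity
    have hb : (0:ℝ) < (j:ℝ) + (N:ℝ) := by linarith
    have hsub : 1/((j:ℝ)+((N:ℝ)-1)) - 1/(((j:ℝ)+1)+((N:ℝ)-1))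
        = 1/(((j:ℝ)+((N:ℝ)-1)) * ((j:ℝ)+(N:ℝ))) := by
      rw [div_sub_div _ _ ha.ne' (by linarith : ((j:ℝ)+1)+((N:ℝ)-1) ≠ 0)]
      congr 1
      · ring
      · ring
    split
    · rw [hsub, one_div_mul_one_div]
      apply one_div_le_one_div_of_le
        (mul_pos (by positivity : (0:ℝ) < 2*ρ^2) (mul_pos ha hb))
      nlinarith [mul_pos ha hb, sq_nonneg ρ, mul_pos hb hb]
    · have := hTnn j
      rw [hTdef] at this
      dsimp only at this
      rw [hsub] at this ⊢
      exact this
  have hle := Summable.tsum_le_tsum hcomp ((summable_nat_add_iff (N-1)).mpr hGsum) hT.summable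
  rw [hT.tsum_eq] at hle
  rw [← hsplit]
  have hfinal : 1/(2*ρ^2) * (1/((N:ℝ)-1)) ≤ 1/ρ := by
    have h1 : 1/(2*ρ) ≤ (N:ℝ) - 1 := by
      have : (1:ℝ) ≤ 1/(2*ρ) := by
        rw [le_div_iff₀ (by positivity)]; linarith
      have h2' : 1/ρ - 1 ≤ (N:ℝ) - 1 := by linarith
      have h3' : 1/(2*ρ) ≤ 1/ρ - 1 := by
        have hh : 1/ρ = 2*(1/(2*ρ)) := by field_simp
        rw [hh]
        linarith
      linarith
    have h2 : 1/((N:ℝ)-1) ≤ 2*ρ := by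
      have := one_div_le_one_div_of_le (by positivity : (0:ℝ) < 1/(2*ρ)) h1
      rwa [one_div_one_div] at this
    have h3 : 1/(2*ρ^2) * (1/((N:ℝ)-1)) ≤ 1/(2*ρ^2) * (2*ρ) :=
      mul_le_mul_of_nonneg_left h2 (by positivity)
    have h4 : 1/(2*ρ^2) * (2*ρ) = 1/ρ := by field_simp
    linarith
  linarith

/-- The mean `m_Q(t) = ∑_{n≥1} (2n-1) t^{2n-1}/(1+t^{2n-1})` with `t = e^{-ρ}` equals
`π²/(24ρ²) + O(1/ρ)` as `ρ → 0⁺`. -/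
theorem stmt_7 :
    ∃ C > (0:ℝ), ∃ ρ₀ > (0:ℝ), ∀ ρ : ℝ, 0 < ρ → ρ < ρ₀ →
      |(∑' n : ℕ, (2 * (n:ℝ) + 1) * Real.exp (-(2 * (n:ℝ) + 1) * ρ) /
          (1 + Real.exp (-(2 * (n:ℝ) + 1) * ρ))) - π^2 / (24 * ρ^2)| ≤ C / ρ := by
  refine ⟨9, by norm_num, 1/2, by norm_num, fun ρ h0 h2 => ?_⟩
  have h1 : ρ ≤ 1 := by linarith
  -- main-term series
  have hM : HasSum (fun k : ℕ => (-1:ℝ)^k * (1/(2*(((k:ℝ)+1)*ρ)^2))) (π^2/(24*ρ^2)) := by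
    have h := hasSum_eta2.mul_left (1/(2*ρ^2))
    have hf : (fun k : ℕ => (1/(2*ρ^2)) * ((-1:ℝ)^k * (1/((k:ℝ)+1)^2)))
        = fun k : ℕ => (-1:ℝ)^k * (1/(2*(((k:ℝ)+1)*ρ)^2)) := by
      funext k
      have hk : ((k:ℝ)+1) ≠ 0 := by positivity
      field_simp
    rw [hf] at h
    convert h using 1
    rfl
    field_simp
    ring
  set D : ℕ → ℝ := fun k =>
    (-1:ℝ)^k * gcf (((k:ℝ)+1)*ρ) - (-1:ℝ)^k * (1/(2*(((k:ℝ)+1)*ρ)^2)) with hDdef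
  set B : ℕ → ℝ := fun k => 4 * Real.exp (-(((k:ℝ)+1)*ρ))
      + (if 1 < ((k:ℝ)+1)*ρ then 1/(2*(((k:ℝ)+1)*ρ)^2) else 0) with hBdef
  have hDabs : ∀ k : ℕ, |D k| ≤ B k := by
    intro k
    have hs : 0 < ((k:ℝ)+1)*ρ := by positivity
    have hD : D k = (-1:ℝ)^k * (gcf (((k:ℝ)+1)*ρ) - 1/(2*(((k:ℝ)+1)*ρ)^2)) := by
      rw [hDdef]; ring
    rw [hD, abs_mul, abs_pow, abs_neg, abs_one, one_pow, one_mul]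
    exact master_bound hs
  have hBsum : Summable B := ((exp_hasSum h0).summable).add (G_bound h0 h2).1
  have hDabs_sum : Summable (fun k => |D k|) :=
    Summable.of_nonneg_of_le (fun k => abs_nonneg _) hDabs hBsum
  have hDsum : Summable D := summable_abs_iff.mp hDabs_sum
  -- S = sum of alternating gcf
  have hkey := key_identity h0
  have hAlt : Summable (fun k : ℕ => (-1:ℝ)^k * gcf (((k:ℝ)+1)*ρ)) := by
    have := hDsum.add hM.summable
    apply this.congr
    intro k
    rw [hDdef]
    ring
  have hSplit : (∑' k : ℕ, (-1:ℝ)^k * gcf (((k:ℝ)+1)*ρ))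
      = (∑' k : ℕ, D k) + π^2/(24*ρ^2) := by
    have hfe : (fun k : ℕ => (-1:ℝ)^k * gcf (((k:ℝ)+1)*ρ))
        = fun k : ℕ => D k + (-1:ℝ)^k * (1/(2*(((k:ℝ)+1)*ρ)^2)) := by
      funext k
      rw [hDdef]
      ring
    rw [hfe, Summable.tsum_add hDsum hM.summable, hM.tsum_eq]
  rw [hkey, hSplit]
  have hstep : |(∑' k : ℕ, D k)| ≤ ∑' k : ℕ, B k := by
    calc |(∑' k : ℕ, D k)| ≤ ∑' k : ℕ, |D k| := by
          have := norm_tsum_le_tsum_norm (f := D) (by simpa [Real.norm_eq_abs] using hDabs_sum)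
          simpa [Real.norm_eq_abs] using this
      _ ≤ ∑' k : ℕ, B k := Summable.tsum_le_tsum hDabs hDabs_sum hBsum
  have hBle : (∑' k : ℕ, B k) ≤ 9/ρ := by
    rw [hBdef]
    rw [Summable.tsum_add ((exp_hasSum h0).summable) (G_bound h0 h2).1]
    have e1 := (exp_hasSum h0).tsum_eq
    rw [e1]
    have e2 := exp_tsum_bound h0 h1
    have e3 := (G_bound h0 h2).2
    have : (8:ℝ)/ρ + 1/ρ = 9/ρ := by ring
    linarith
  have : (∑' k : ℕ, D k) + π^2/(24*ρ^2) - π^2/(24*ρ^2) = ∑' k : ℕ, D k := by ring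
  rw [this]
  linarith [hstep, hBle]
end

section
/- As λ → 0⁺, log ∏_{n≥1}(1 + e^{-(2n-1)λ}) = π²/(24λ) + O(λ). -/
open Real

namespace Stmt9Aux

noncomputable def phi (x : ℝ) : ℝ := 1 / (2 * x ^ 2) - 1 / (2 * x * Real.sinh x)

lemma nat_sq_le (m : ℕ) : ((m : ℝ) + 1) ^ 2 ≤ 4 ^ m := by
  induction m with
  | zero => norm_num
  | succ n ih =>
      have hn : (0:ℝ) ≤ (n:ℝ) := Nat.cast_nonneg n
      push_cast
      calc ((n:ℝ) + 1 + 1) ^ 2 ≤ 4 * ((n:ℝ) + 1) ^ 2 := by nlinarith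
        _ ≤ 4 * 4 ^ n := by nlinarith
        _ = 4 ^ (n + 1) := by ring

lemma key_ineq {x : ℝ} (hx : 0 ≤ x) :
    x * Real.sinh x + x ^ 2 * Real.cosh x ≤ Real.cosh (2 * x) - 1 := by
  have hs : HasSum (fun m : ℕ => x * (x ^ (2 * m + 1) / ((2 * m + 1).factorial : ℝ))) (x * Real.sinh x) :=
    (Real.hasSum_sinh x).mul_left x
  have hc : HasSum (fun m : ℕ => x ^ 2 * (x ^ (2 * m) / ((2 * m).factorial : ℝ)))
      (x ^ 2 * Real.cosh x) := (Real.hasSum_cosh x).mul_left (x ^ 2)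
  have hL := hs.add hc
  have hR : HasSum (fun m : ℕ => (2 * x) ^ (2 * (m + 1)) / ((2 * (m + 1)).factorial : ℝ))
      (Real.cosh (2 * x) - 1) := by
    have h := (hasSum_nat_add_iff'
      (f := fun m : ℕ => (2 * x) ^ (2 * m) / ((2 * m).factorial : ℝ)) 1).mpr (Real.hasSum_cosh (2 * x))
    simpa using h
  refine hasSum_le (fun m => ?_) hL hR
  have hA : (0:ℝ) < ((2 * m).factorial : ℝ) := by exact_mod_cast (2*m).factorial_pos
  have hB : ((2 * m + 1).factorial : ℝ) = (2 * (m:ℝ) + 1) * ((2 * m).factorial : ℝ) := by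
    rw [Nat.factorial_succ]; push_cast; ring
  have hC : ((2 * (m + 1)).factorial : ℝ) = (2 * (m:ℝ) + 2) * ((2 * (m:ℝ) + 1) * ((2 * m).factorial : ℝ)) := by
    have : 2 * (m + 1) = (2 * m + 1) + 1 := by ring
    rw [this, Nat.factorial_succ, Nat.factorial_succ]; push_cast; ring
  have hx2 : (0:ℝ) ≤ x ^ (2 * m + 2) := by positivity
  have hcoef : 1 / ((2 * m + 1).factorial : ℝ) + 1 / ((2 * m).factorial : ℝ)
      ≤ 4 ^ (m + 1) / ((2 * (m + 1)).factorial : ℝ) := by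
    rw [hB, hC]
    have hm1 : (0:ℝ) < 2 * (m:ℝ) + 1 := by positivity
    have hm2 : (0:ℝ) < 2 * (m:ℝ) + 2 := by positivity
    rw [div_add_div _ _ (by positivity) (by positivity), div_le_div_iff₀ (by positivity) (by positivity)]
    have h4 : (2 * (m:ℝ) + 2) ^ 2 ≤ 4 ^ (m + 1) := by
      have := nat_sq_le m
      calc (2 * (m:ℝ) + 2) ^ 2 = 4 * ((m:ℝ) + 1) ^ 2 := by ring
        _ ≤ 4 * 4 ^ m := by linarith
        _ = 4 ^ (m + 1) := by ring
    nlinarith [mul_le_mul_of_nonneg_right h4 (le_of_lt (mul_pos hm1 (mul_pos hA hA)))]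
  calc x * (x ^ (2 * m + 1) / ((2 * m + 1).factorial : ℝ)) + x ^ 2 * (x ^ (2 * m) / ((2 * m).factorial : ℝ))
      = x ^ (2 * m + 2) * (1 / ((2 * m + 1).factorial : ℝ) + 1 / ((2 * m).factorial : ℝ)) := by ring
    _ ≤ x ^ (2 * m + 2) * (4 ^ (m + 1) / ((2 * (m + 1)).factorial : ℝ)) :=
        mul_le_mul_of_nonneg_left hcoef hx2
    _ = (2 * x) ^ (2 * (m + 1)) / ((2 * (m + 1)).factorial : ℝ) := by
        rw [mul_pow]
        have : (2:ℝ) ^ (2 * (m + 1)) = 4 ^ (m + 1) := by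
          rw [pow_mul]; norm_num
        rw [this]
        have hxp : x ^ (2 * (m + 1)) = x ^ (2 * m + 2) := by ring_nf
        rw [hxp]; ring

lemma key_ineq2 {x : ℝ} (hx : 0 ≤ x) :
    6 * Real.sinh x - 6 * x ≤ x ^ 2 * Real.sinh x := by
  have hL : HasSum (fun m : ℕ => 6 * (x ^ (2 * (m + 1) + 1) / ((2 * (m + 1) + 1).factorial : ℝ)))
      (6 * Real.sinh x - 6 * x) := by
    have h := (hasSum_nat_add_iff'
      (f := fun m : ℕ => 6 * (x ^ (2 * m + 1) / ((2 * m + 1).factorial : ℝ))) 1).mpr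
      ((Real.hasSum_sinh x).mul_left 6)
    simpa using h
  have hRt : HasSum (fun m : ℕ => x ^ 2 * (x ^ (2 * m + 1) / ((2 * m + 1).factorial : ℝ)))
      (x ^ 2 * Real.sinh x) := (Real.hasSum_sinh x).mul_left (x ^ 2)
  refine hasSum_le (fun m => ?_) hL hRt
  have hA : (0:ℝ) < ((2 * m + 1).factorial : ℝ) := by exact_mod_cast (2*m+1).factorial_pos
  have hC : ((2 * (m + 1) + 1).factorial : ℝ)
      = (2 * (m:ℝ) + 3) * ((2 * (m:ℝ) + 2) * ((2 * m + 1).factorial : ℝ)) := by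
    have : 2 * (m + 1) + 1 = (2 * m + 1) + 1 + 1 := by ring
    rw [this, Nat.factorial_succ, Nat.factorial_succ]; push_cast; ring
  have hx2 : (0:ℝ) ≤ x ^ (2 * m + 3) := by positivity
  have hcoef : 6 / ((2 * (m + 1) + 1).factorial : ℝ) ≤ 1 / ((2 * m + 1).factorial : ℝ) := by
    rw [hC]
    have hm2 : (0:ℝ) < 2 * (m:ℝ) + 2 := by positivity
    have hm3 : (0:ℝ) < 2 * (m:ℝ) + 3 := by positivity
    rw [div_le_div_iff₀ (by positivity) hA]
    nlinarith [mul_pos hm2 hA, mul_pos hm3 (mul_pos hm2 hA)]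
  calc 6 * (x ^ (2 * (m + 1) + 1) / ((2 * (m + 1) + 1).factorial : ℝ))
      = x ^ (2 * m + 3) * (6 / ((2 * (m + 1) + 1).factorial : ℝ)) := by
        have : x ^ (2 * (m + 1) + 1) = x ^ (2 * m + 3) := by ring_nf
        rw [this]; ring
    _ ≤ x ^ (2 * m + 3) * (1 / ((2 * m + 1).factorial : ℝ)) := mul_le_mul_of_nonneg_left hcoef hx2
    _ = x ^ 2 * (x ^ (2 * m + 1) / ((2 * m + 1).factorial : ℝ)) := by ring


lemma phi_nonneg {x : ℝ} (hx : 0 < x) : 0 ≤ phi x := by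
  have hs : x < Real.sinh x := Real.self_lt_sinh_iff.mpr hx
  have h : 1 / (2 * x * Real.sinh x) ≤ 1 / (2 * x ^ 2) := by
    apply one_div_le_one_div_of_le (by positivity)
    nlinarith
  unfold phi; linarith

lemma phi_le_sq {x : ℝ} (hx : 0 < x) : phi x ≤ 1 / (2 * x ^ 2) := by
  have hs : 0 < Real.sinh x := Real.sinh_pos_iff.mpr hx
  have : 0 ≤ 1 / (2 * x * Real.sinh x) := by positivity
  unfold phi; linarith

lemma phi_le {x : ℝ} (hx : 0 < x) : phi x ≤ 1 / 12 := by
  have hs : 0 < Real.sinh x := Real.sinh_pos_iff.mpr hx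
  have h12 : (0:ℝ) < 12 * x ^ 2 * Real.sinh x := by positivity
  have hmul : phi x * (12 * x ^ 2 * Real.sinh x)
      ≤ (1 / 12) * (12 * x ^ 2 * Real.sinh x) := by
    have hp : phi x * (12 * x ^ 2 * Real.sinh x) = 6 * Real.sinh x - 6 * x := by
      unfold phi; field_simp; ring
    have hq : (1 / 12 : ℝ) * (12 * x ^ 2 * Real.sinh x) = x ^ 2 * Real.sinh x := by ring
    rw [hp, hq]
    exact key_ineq2 hx.le
  exact le_of_mul_le_mul_right hmul h12

lemma phi_hasDerivAt {x : ℝ} (hx : 0 < x) :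
    HasDerivAt phi (-(4 * x) / (2 * x ^ 2) ^ 2
      + (2 * Real.sinh x + 2 * x * Real.cosh x) / (2 * x * Real.sinh x) ^ 2) x := by
  have hs : 0 < Real.sinh x := Real.sinh_pos_iff.mpr hx
  have h1 : HasDerivAt (fun y : ℝ => 2 * y ^ 2) (4 * x) x := by
    have := (hasDerivAt_pow 2 x).const_mul (2:ℝ)
    simpa using this.congr_deriv (by ring)
  have ha : HasDerivAt (fun y : ℝ => 2 * y) 2 x := by
    simpa using (hasDerivAt_id x).const_mul (2:ℝ)
  have h2 : HasDerivAt (fun y : ℝ => 2 * y * Real.sinh y)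
      (2 * Real.sinh x + 2 * x * Real.cosh x) x := by
    have hm := ha.mul (Real.hasDerivAt_sinh x)
    change HasDerivAt (fun y : ℝ => 2 * y * Real.sinh y) _ x at hm
    simpa using hm
  have h1' := h1.inv (by positivity)
  have h2' := h2.inv (by positivity)
  have h := h1'.sub h2'
  have hfun : (fun y : ℝ => (2 * y ^ 2)⁻¹ - (2 * y * Real.sinh y)⁻¹) = phi := by
    funext y; unfold phi; rw [one_div, one_div]
  change HasDerivAt (fun y : ℝ => (2 * y ^ 2)⁻¹ - (2 * y * Real.sinh y)⁻¹) _ x at h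
  rw [hfun] at h
  convert h using 1
  ring

lemma phi_anti : AntitoneOn phi (Set.Ioi (0:ℝ)) := by
  have hderiv : ∀ x ∈ interior (Set.Ioi (0:ℝ)), deriv phi x ≤ 0 := by
    rw [interior_Ioi]
    intro x hx
    rw [Set.mem_Ioi] at hx
    have hs : 0 < Real.sinh x := Real.sinh_pos_iff.mpr hx
    rw [(phi_hasDerivAt hx).deriv]
    have h2s : 2 * Real.sinh x ^ 2 = Real.cosh (2 * x) - 1 := by
      rw [Real.cosh_two_mul, Real.cosh_sq]; ring
    have hk : x * Real.sinh x + x ^ 2 * Real.cosh x ≤ 2 * Real.sinh x ^ 2 := by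
      rw [h2s]; exact key_ineq hx.le
    have hfrac : (2 * Real.sinh x + 2 * x * Real.cosh x) / (2 * x * Real.sinh x) ^ 2
        ≤ (4 * x) / (2 * x ^ 2) ^ 2 := by
      rw [div_le_div_iff₀ (by positivity) (by positivity)]
      nlinarith [mul_le_mul_of_nonneg_left hk (by positivity : (0:ℝ) ≤ 8 * x ^ 3)]
    have hneg : -(4 * x) / (2 * x ^ 2) ^ 2 = -(4 * x / (2 * x ^ 2) ^ 2) := by ring
    rw [hneg]
    linarith
  apply antitoneOn_of_deriv_nonpos (convex_Ioi 0) ?_ ?_ hderiv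
  · intro x hx
    exact (phi_hasDerivAt hx).continuousAt.continuousWithinAt
  · rw [interior_Ioi]
    intro x hx
    exact (phi_hasDerivAt hx).differentiableAt.differentiableWithinAt


lemma hasSum_odd_geom {c : ℝ} (hc : 0 < c) :
    HasSum (fun n : ℕ => Real.exp (-c) ^ (2 * n + 1)) (1 / (2 * Real.sinh c)) := by
  set r := Real.exp (-c) with hr
  have hr0 : 0 < r := Real.exp_pos _
  have hr1 : r < 1 := Real.exp_lt_one_iff.mpr (by linarith)
  have h2 : r ^ 2 < 1 := by nlinarith
  have hg : HasSum (fun n : ℕ => (r ^ 2) ^ n) (1 - r ^ 2)⁻¹ :=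
    hasSum_geometric_of_lt_one (by positivity) h2
  have h := hg.mul_left r
  have heq : (fun n : ℕ => r * (r ^ 2) ^ n) = fun n : ℕ => r ^ (2 * n + 1) := by
    funext n; rw [← pow_mul]; ring
  rw [heq] at h
  convert h using 1
  · rfl
  have hE : 1 < Real.exp c := Real.one_lt_exp_iff.mpr hc
  have hEne : Real.exp c ≠ 0 := by positivity
  have key : (1 - ((Real.exp c)⁻¹) ^ 2) * Real.exp c = Real.exp c - (Real.exp c)⁻¹ := by
    field_simp
  calc 1 / (2 * Real.sinh c) = (Real.exp c - (Real.exp c)⁻¹)⁻¹ := by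
        rw [Real.sinh_eq, Real.exp_neg, one_div]
        congr 1
        ring
    _ = ((1 - ((Real.exp c)⁻¹) ^ 2) * Real.exp c)⁻¹ := by rw [key]
    _ = r * (1 - r ^ 2)⁻¹ := by
        rw [mul_inv, hr, Real.exp_neg]
        ring

lemma hasSum_both {μ : ℝ} (hμ : 0 < μ) :
    ∃ T : ℝ, HasSum (fun n : ℕ => -Real.log (1 - Real.exp (-(2 * (n:ℝ) + 1) * μ))) T ∧
      HasSum (fun k : ℕ => 1 / (2 * ((k:ℝ) + 1) * Real.sinh (((k:ℝ) + 1) * μ))) T := by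
  set F : ℕ × ℕ → ℝ :=
    fun p => Real.exp (-(2 * (p.1:ℝ) + 1) * μ) ^ (p.2 + 1) / ((p.2:ℝ) + 1) with hF
  have hr0 : 0 < Real.exp (-μ) := Real.exp_pos _
  have hr1 : Real.exp (-μ) < 1 := Real.exp_lt_one_iff.mpr (by linarith)
  have hFpow : ∀ p : ℕ × ℕ,
      Real.exp (-(2 * (p.1:ℝ) + 1) * μ) ^ (p.2 + 1)
        = Real.exp (-μ) ^ ((2 * p.1 + 1) * (p.2 + 1)) := by
    intro p
    rw [← Real.exp_nat_mul, ← Real.exp_nat_mul]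
    congr 1
    push_cast
    ring
  have hFs : Summable F := by
    have hgeo : Summable (fun x : ℕ × ℕ => Real.exp (-μ) ^ x.1 * Real.exp (-μ) ^ x.2) :=
      (summable_geometric_of_lt_one hr0.le hr1).mul_of_nonneg
        (summable_geometric_of_lt_one hr0.le hr1)
        (fun n => by positivity) (fun n => by positivity)
    refine Summable.of_nonneg_of_le (fun p => by positivity) (fun p => ?_) hgeo
    rw [hF]
    dsimp only
    rw [hFpow p]
    have hle : p.1 + p.2 ≤ (2 * p.1 + 1) * (p.2 + 1) := by nlinarith
    calc Real.exp (-μ) ^ ((2 * p.1 + 1) * (p.2 + 1)) / ((p.2:ℝ) + 1)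
        ≤ Real.exp (-μ) ^ ((2 * p.1 + 1) * (p.2 + 1)) := by
          apply div_le_self (by positivity)
          have : (0:ℝ) ≤ (p.2:ℝ) := Nat.cast_nonneg _
          linarith
      _ ≤ Real.exp (-μ) ^ (p.1 + p.2) := pow_le_pow_of_le_one hr0.le hr1.le hle
      _ = Real.exp (-μ) ^ p.1 * Real.exp (-μ) ^ p.2 := pow_add _ _ _
  refine ⟨∑' p, F p, ?_, ?_⟩
  · apply hFs.hasSum.prod_fiberwise
    intro n
    have harg : -(2 * (n:ℝ) + 1) * μ < 0 := by
      have : (0:ℝ) ≤ (n:ℝ) := Nat.cast_nonneg _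
      nlinarith
    have ht0 : 0 < Real.exp (-(2 * (n:ℝ) + 1) * μ) := Real.exp_pos _
    have ht1 : Real.exp (-(2 * (n:ℝ) + 1) * μ) < 1 := Real.exp_lt_one_iff.mpr harg
    have := hasSum_pow_div_log_of_abs_lt_one
      (x := Real.exp (-(2 * (n:ℝ) + 1) * μ)) (by rw [abs_of_pos ht0]; exact ht1)
    exact this
  · have hsymm : Summable (fun p : ℕ × ℕ => F p.swap) := hFs.prod_symm
    have hts : ∑' p : ℕ × ℕ, F p.swap = ∑' p, F p := by
      have := (Equiv.prodComm ℕ ℕ).tsum_eq (f := F)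
      simpa [Function.comp] using this
    rw [← hts]
    apply hsymm.hasSum.prod_fiberwise
    intro k
    have hc : 0 < ((k:ℝ) + 1) * μ := by positivity
    have h := (hasSum_odd_geom hc).div_const ((k:ℝ) + 1)
    have hfun : (fun n : ℕ => Real.exp (-(((k:ℝ) + 1) * μ)) ^ (2 * n + 1) / ((k:ℝ) + 1))
        = fun n : ℕ => F ((k, n) : ℕ × ℕ).swap := by
      funext n
      rw [hF]
      simp only [Prod.swap_prod_mk]
      congr 1
      rw [← Real.exp_nat_mul, ← Real.exp_nat_mul]
      congr 1
      push_cast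
      ring
    rw [hfun] at h
    convert h using 1
    · rfl
    rw [div_div]
    ring_nf

lemma hasSum_zeta_shift {μ : ℝ} (hμ : 0 < μ) :
    HasSum (fun k : ℕ => 1 / (2 * ((k:ℝ) + 1) ^ 2 * μ)) (π ^ 2 / (12 * μ)) := by
  have h1 : HasSum (fun n : ℕ => (1:ℝ) / ((n:ℝ) + 1) ^ 2) (π ^ 2 / 6) := by
    have := (hasSum_nat_add_iff' (f := fun n : ℕ => (1:ℝ) / (n:ℝ) ^ 2) 1).mpr hasSum_zeta_two
    simpa using this
  have h := h1.mul_left (1 / (2 * μ))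
  have hfun : (fun k : ℕ => 1 / (2 * μ) * ((1:ℝ) / ((k:ℝ) + 1) ^ 2))
      = fun k : ℕ => 1 / (2 * ((k:ℝ) + 1) ^ 2 * μ) := by
    funext k
    have : ((k:ℝ) + 1) ≠ 0 := by positivity
    field_simp
  rw [hfun] at h
  convert h using 1
  · rfl
  field_simp
  ring

lemma hasSum_R {μ : ℝ} (hμ : 0 < μ) {T : ℝ}
    (hT : HasSum (fun k : ℕ => 1 / (2 * ((k:ℝ) + 1) * Real.sinh (((k:ℝ) + 1) * μ))) T) :
    HasSum (fun k : ℕ => μ * phi (((k:ℝ) + 1) * μ)) (π ^ 2 / (12 * μ) - T) := by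
  have h := (hasSum_zeta_shift hμ).sub hT
  have hfun : (fun k : ℕ => 1 / (2 * ((k:ℝ) + 1) ^ 2 * μ)
      - 1 / (2 * ((k:ℝ) + 1) * Real.sinh (((k:ℝ) + 1) * μ)))
      = fun k : ℕ => μ * phi (((k:ℝ) + 1) * μ) := by
    funext k
    have hk : (0:ℝ) < (k:ℝ) + 1 := by positivity
    have hs : 0 < Real.sinh (((k:ℝ) + 1) * μ) := Real.sinh_pos_iff.mpr (by positivity)
    unfold phi
    field_simp
  rw [hfun] at h
  exact h

end Stmt9Aux

open Stmt9Aux in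
/-- `log ∏_{n≥1}(1+e^{-(2n-1)λ}) = π²/(24λ) + O(λ)` as `λ → 0⁺`. -/
theorem stmt_9 :
    ∃ C > (0:ℝ), ∃ Λ > (0:ℝ), ∀ lam : ℝ, 0 < lam → lam < Λ →
      |Real.log (∏' n : ℕ, (1 + Real.exp (-(2 * (n:ℝ) + 1) * lam))) - π^2 / (24 * lam)|
        ≤ C * lam := by
  refine ⟨1, one_pos, 1, one_pos, fun lam hl _ => ?_⟩
  obtain ⟨T1, hlog1, hT1⟩ := hasSum_both hl
  have h2l : (0:ℝ) < 2 * lam := by linarith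
  obtain ⟨T2, hlog2, hT2⟩ := hasSum_both h2l
  -- the sum of logs
  have hS : HasSum (fun n : ℕ => Real.log (1 + Real.exp (-(2 * (n:ℝ) + 1) * lam)))
      (T1 - T2) := by
    have h := hlog1.sub hlog2
    have hfun : (fun n : ℕ => -Real.log (1 - Real.exp (-(2 * (n:ℝ) + 1) * lam))
        - -Real.log (1 - Real.exp (-(2 * (n:ℝ) + 1) * (2 * lam))))
        = fun n : ℕ => Real.log (1 + Real.exp (-(2 * (n:ℝ) + 1) * lam)) := by
      funext n
      set t := Real.exp (-(2 * (n:ℝ) + 1) * lam) with ht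
      have harg : -(2 * (n:ℝ) + 1) * lam < 0 := by
        have : (0:ℝ) ≤ (n:ℝ) := Nat.cast_nonneg _
        nlinarith
      have h0 : 0 < t := Real.exp_pos _
      have h1 : t < 1 := Real.exp_lt_one_iff.mpr harg
      have hsq : Real.exp (-(2 * (n:ℝ) + 1) * (2 * lam)) = t ^ 2 := by
        rw [ht, sq, ← Real.exp_add]
        congr 1
        ring
      rw [hsq]
      have hdiv : (1:ℝ) + t = (1 - t ^ 2) / (1 - t) := by
        have : (1:ℝ) - t ≠ 0 := by linarith
        field_simp
        ring
      rw [hdiv, Real.log_div (by nlinarith) (by linarith)]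
      ring
    rw [hfun] at h
    exact h
  -- identify the log of the product
  have hpos : ∀ n : ℕ, 0 < 1 + Real.exp (-(2 * (n:ℝ) + 1) * lam) := fun n => by positivity
  have htp : Real.log (∏' n : ℕ, (1 + Real.exp (-(2 * (n:ℝ) + 1) * lam))) = T1 - T2 := by
    have hfun : (Real.exp ∘ fun n : ℕ => Real.log (1 + Real.exp (-(2 * (n:ℝ) + 1) * lam)))
        = fun n : ℕ => 1 + Real.exp (-(2 * (n:ℝ) + 1) * lam) := by
      funext n
      exact Real.exp_log (hpos n)
    have hprod : HasProd (fun n : ℕ => 1 + Real.exp (-(2 * (n:ℝ) + 1) * lam))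
        (Real.exp (T1 - T2)) := by
      rw [← hfun]
      exact hS.rexp
    rw [hprod.tprod_eq, Real.log_exp]
  -- the remainder sums
  have hRa : HasSum (fun k : ℕ => lam * phi (((k:ℝ) + 1) * lam)) (π ^ 2 / (12 * lam) - T1) :=
    hasSum_R hl hT1
  set a : ℕ → ℝ := fun j => phi (((j:ℝ) + 1) * lam) with ha
  have hRb : HasSum (fun k : ℕ => 2 * lam * a (2 * k + 1)) (π ^ 2 / (24 * lam) - T2) := by
    have h := hasSum_R h2l hT2
    have hfun : (fun k : ℕ => 2 * lam * phi (((k:ℝ) + 1) * (2 * lam)))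
        = fun k : ℕ => 2 * lam * a (2 * k + 1) := by
      funext k
      rw [ha]
      congr 2
      push_cast
      ring
    have hval : π ^ 2 / (12 * (2 * lam)) = π ^ 2 / (24 * lam) := by ring_nf
    rw [hfun, hval] at h
    exact h
  -- summability of a and subsequences
  have haS : Summable a := by
    have h := hRa.summable
    have : (fun k : ℕ => lam⁻¹ * (lam * phi (((k:ℝ) + 1) * lam))) = a := by
      funext k
      rw [ha]
      field_simp
    rw [← this]
    exact h.mul_left _
  have hE : Summable (fun k : ℕ => a (2 * k)) :=
    haS.comp_injective (fun x y h => by omega)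
  have hO : Summable (fun k : ℕ => a (2 * k + 1)) :=
    haS.comp_injective (fun x y h => by omega)
  set E := ∑' k, a (2 * k) with hEdef
  set O := ∑' k, a (2 * k + 1) with hOdef
  have hEO : HasSum a (E + O) := hE.hasSum.even_add_odd hO.hasSum
  have eq1 : π ^ 2 / (12 * lam) - T1 = lam * (E + O) :=
    hRa.unique (hEO.mul_left lam)
  have eq2 : π ^ 2 / (24 * lam) - T2 = 2 * lam * O :=
    hRb.unique (hO.hasSum.mul_left (2 * lam))
  -- antitonicity facts
  have hmem : ∀ j : ℕ, (((j:ℝ) + 1) * lam) ∈ Set.Ioi (0:ℝ) := fun j => by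
    simp only [Set.mem_Ioi]; positivity
  have hanti : ∀ i j : ℕ, i ≤ j → a j ≤ a i := by
    intro i j hij
    apply phi_anti (hmem i) (hmem j)
    have : (i:ℝ) ≤ (j:ℝ) := Nat.cast_le.mpr hij
    nlinarith
  -- the telescoping bound
  have hEOsub : Summable (fun k : ℕ => a (2 * k) - a (2 * k + 1)) := hE.sub hO
  have hDelta : E - O = ∑' k, (a (2 * k) - a (2 * k + 1)) := (Summable.tsum_sub hE hO).symm
  have hDelta0 : 0 ≤ E - O := by
    rw [hDelta]
    exact tsum_nonneg fun k => sub_nonneg.mpr (hanti _ _ (by omega))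
  have hTel : HasSum (fun k : ℕ => a (2 * k) - a (2 * (k + 1))) (a 0) := by
    rw [hasSum_iff_tendsto_nat_of_nonneg
      (fun k => sub_nonneg.mpr (hanti _ _ (by omega)))]
    have hps : (fun n : ℕ => ∑ i ∈ Finset.range n, (a (2 * i) - a (2 * (i + 1))))
        = fun n : ℕ => a 0 - a (2 * n) := by
      funext n
      exact Finset.sum_range_sub' (fun i => a (2 * i)) n
    rw [hps]
    have h2n : Filter.Tendsto (fun n : ℕ => 2 * n) Filter.atTop Filter.atTop :=
      Filter.tendsto_atTop_mono (fun n => Nat.le_mul_of_pos_left n two_pos) Filter.tendsto_id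
    have hz : Filter.Tendsto (fun n : ℕ => a (2 * n)) Filter.atTop (nhds 0) :=
      (haS.tendsto_atTop_zero).comp h2n
    simpa using (tendsto_const_nhds : Filter.Tendsto (fun _ : ℕ => a 0) Filter.atTop (nhds (a 0))).sub hz
  have hDeltaLe : E - O ≤ a 0 := by
    rw [hDelta, ← hTel.tsum_eq]
    apply Summable.tsum_le_tsum ?_ hEOsub hTel.summable
    intro k
    have : a (2 * (k + 1)) ≤ a (2 * k + 1) := hanti _ _ (by omega)
    linarith
  have ha0 : a 0 ≤ 1 / 12 := by
    have : ((0:ℕ):ℝ) + 1 = 1 := by norm_num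
    rw [ha]
    simpa [this] using phi_le hl
  -- put everything together
  have hkey : T1 - T2 - π ^ 2 / (24 * lam) = -(lam * (E - O)) := by
    linear_combination eq2 - eq1
  rw [htp, hkey]
  rw [abs_neg, abs_of_nonneg (mul_nonneg hl.le hDelta0)]
  nlinarith [hDelta0, hDeltaLe, ha0]
end

section
/- For 0 < t < 1 with ρ := -log t, the sum ∑_{n≥1} n t^n/(1 - t^n) equals π²/(6ρ²) + O(1/ρ) as ρ → 0⁺. -/
open Real

set_option maxHeartbeats 1000000


lemma sinh_le_cubic {v : ℝ} (hv0 : 0 < v) (hv : v ≤ 1/2) : Real.sinh v ≤ v + v^3 := by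
  have h1 := Real.exp_bound (x := v) (by rw [abs_of_pos hv0]; linarith) (n := 4) (by norm_num)
  have h2 := Real.exp_bound (x := -v) (by rw [abs_neg, abs_of_pos hv0]; linarith) (n := 4)
      (by norm_num)
  rw [abs_of_pos hv0] at h1
  rw [abs_neg, abs_of_pos hv0] at h2
  simp only [Finset.sum_range_succ, Finset.sum_range_zero] at h1 h2
  norm_num [Nat.factorial] at h1 h2
  rw [Real.sinh_eq]
  rw [abs_le] at h1 h2
  nlinarith [pow_le_pow_left₀ hv0.le hv 4, mul_le_of_le_one_right (pow_pos hv0 3).le (by linarith : v ≤ 1), sq_nonneg v, pow_pos hv0 3, pow_pos hv0 4]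


lemma g_eq {u : ℝ} (hu : 0 < u) :
    Real.exp (-u) / (1 - Real.exp (-u))^2 = 1 / (4 * Real.sinh (u/2)^2) := by
  have ha : (0:ℝ) < Real.exp (-(u/2)) := Real.exp_pos _
  have ha1 : Real.exp (-(u/2)) < 1 := Real.exp_lt_one_iff.mpr (by linarith)
  set a := Real.exp (-(u/2)) with hadef
  have h2 : Real.exp (-u) = a ^ 2 := by
    rw [hadef, ← Real.exp_nat_mul]; push_cast; ring_nf
  have hs : Real.sinh (u/2) = (1 - a^2)/(2*a) := by
    rw [Real.sinh_eq, show Real.exp (u/2) = a⁻¹ by rw [hadef, ← Real.exp_neg]; ring_nf,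
      show Real.exp (-(u/2)) = a from rfl]
    field_simp
  have h3 : 1 - a^2 ≠ 0 := by nlinarith
  rw [h2, hs, div_pow]
  rw [eq_div_iff (by positivity), div_mul_eq_mul_div, mul_comm]
  rw [div_eq_iff (by positivity), one_mul]
  field_simp
  ring



lemma key_lower {u : ℝ} (hu : 0 < u) :
    Real.exp (-u) / (1 - Real.exp (-u))^2 ≤ 1 / u^2 := by
  rw [g_eq hu]
  have hv : 0 < u/2 := by linarith
  have hs := Real.self_lt_sinh_iff.mpr hv
  have : u^2 ≤ 4 * Real.sinh (u/2)^2 := by nlinarith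
  apply one_div_le_one_div_of_le (by positivity) this

lemma key_upper {u : ℝ} (hu : 0 < u) :
    1 / u^2 - Real.exp (-u) / (1 - Real.exp (-u))^2 ≤ 4 / (1+u)^2 := by
  rw [g_eq hu]
  have hv : 0 < u/2 := by linarith
  have hs := Real.self_lt_sinh_iff.mpr hv
  rcases le_or_gt u 1 with h | h
  · have hcub := sinh_le_cubic hv (by linarith)
    set v := u/2
    set s := Real.sinh v with hsdef
    have hsp : 0 < s := lt_trans hv hs
    have hd : 1 / u^2 - 1 / (4*s^2) ≤ 1 := by
      have hv2 : v ≤ 1/2 := by simp only [show v = u/2 from rfl]; linarith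
      have hs2 : s^2 ≤ (v+v^3)^2 := by nlinarith
      have h4 : v^2 ≤ 1/4 := by nlinarith
      have h5 : v^2 < s^2 := by nlinarith
      have h1 : s^2 - v^2 ≤ 4 * v^2 * s^2 := by
        nlinarith [pow_nonneg hv.le 4, sq_nonneg (v*v), mul_le_mul_of_nonneg_left h4 (pow_nonneg hv.le 4)]
      have hu2 : u^2 = 4 * v^2 := by rw [show v = u/2 from rfl]; ring
      rw [hu2, div_sub_div _ _ (by positivity) (by positivity), div_le_one (by positivity)]
      nlinarith
    have : (1:ℝ) ≤ 4/(1+u)^2 := by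
      rw [le_div_iff₀ (by positivity)]; nlinarith
    linarith
  · have hg : 0 ≤ 1 / (4 * Real.sinh (u/2)^2) := by positivity
    have : 1/u^2 ≤ 4/(1+u)^2 := by
      rw [div_le_div_iff₀ (by positivity) (by positivity)]; nlinarith
    linarith

/-- `∑_{n≥1} n t^n/(1-t^n) = π²/(6ρ²) + O(1/ρ)` with `t = e^{-ρ}` as `ρ → 0⁺`. -/
theorem stmt_14 :
    ∃ C > (0:ℝ), ∃ ρ₀ > (0:ℝ), ∀ ρ : ℝ, 0 < ρ → ρ < ρ₀ →
      |(∑' n : ℕ, ((n:ℝ) + 1) * Real.exp (-((n:ℝ) + 1) * ρ) /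
          (1 - Real.exp (-((n:ℝ) + 1) * ρ))) - π^2 / (6 * ρ^2)| ≤ C / ρ := by
  refine ⟨4, by norm_num, 1, by norm_num, fun ρ hρ hρ1 => ?_⟩
  set e : ℕ → ℝ := fun n => Real.exp (-((n:ℝ) + 1) * ρ) with he_def
  have he : ∀ n, 0 < e n := fun n => Real.exp_pos _
  have he1 : ∀ n, e n < 1 := by
    intro n
    apply Real.exp_lt_one_iff.mpr
    have : (0:ℝ) < (n:ℝ) + 1 := by positivity
    nlinarith
  set F : ℕ → ℕ → ℝ := fun m j => ((m:ℝ) + 1) * (e m) ^ (j+1) with hF_def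
  set T : ℕ → ℝ := fun n => ((n:ℝ) + 1) * Real.exp (-((n:ℝ) + 1) * ρ) /
      (1 - Real.exp (-((n:ℝ) + 1) * ρ)) with hT_def
  set G : ℕ → ℝ := fun j => e j / (1 - e j)^2 with hG_def
  -- symmetry of the double array
  have hsym : ∀ m j : ℕ, (e m) ^ (j+1) = (e j) ^ (m+1) := by
    intro m j
    rw [he_def]
    simp only []
    rw [← Real.exp_nat_mul, ← Real.exp_nat_mul]
    congr 1
    push_cast
    ring
  -- row sums
  have hrow : ∀ m, HasSum (F m) (T m) := by
    intro m
    have hg := (hasSum_geometric_of_lt_one (he m).le (he1 m)).mul_left (((m:ℝ)+1) * e m)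
    have hfun : F m = fun j => (((m:ℝ)+1) * e m) * (e m)^j := by
      funext j
      simp only [hF_def]
      rw [pow_succ']
      ring
    have hval : T m = (((m:ℝ)+1) * e m) * (1 - e m)⁻¹ := by
      rw [hT_def]
      simp only []
      rw [div_eq_mul_inv]
    rw [hfun, hval]
    exact hg
  -- column sums
  have hcol : ∀ j, HasSum (fun m => F m j) (G j) := by
    intro j
    have hn : ‖e j‖ < 1 := by rw [Real.norm_eq_abs, abs_of_pos (he j)]; exact he1 j
    have h0 := hasSum_coe_mul_geometric_of_norm_lt_one hn
    have h1 := (hasSum_nat_add_iff' 1).mpr h0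
    simp only [Finset.sum_range_one, Nat.cast_zero, zero_mul, pow_zero, sub_zero] at h1
    convert h1 using 1
    · rfl
    funext m
    simp only [hF_def]
    rw [hsym m j]
    push_cast
    ring
  -- summability of the double array
  have hTnn : ∀ m, 0 ≤ T m := by
    intro m
    have h1m : (0:ℝ) < 1 - e m := by linarith [he1 m]
    rw [hT_def]
    positivity
  have hTle : ∀ m, T m ≤ (((m:ℝ)+1) * (e 0) ^ (m+1)) * (1 - e 0)⁻¹ := by
    intro m
    have h1m : (0:ℝ) < 1 - e m := by linarith [he1 m]
    have h10 : (0:ℝ) < 1 - e 0 := by linarith [he1 0]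
    have hpow : e m = e 0 ^ (m+1) := by
      have h := hsym m 0
      rwa [pow_one] at h
    have hle : e m ≤ e 0 := by
      rw [hpow]
      calc (e 0)^(m+1) ≤ (e 0)^1 := pow_le_pow_of_le_one (he 0).le (he1 0).le (by omega)
      _ = e 0 := pow_one _
    have hval : T m = (((m:ℝ)+1) * e m) * (1 - e m)⁻¹ := by
      rw [hT_def]; simp only []; rw [div_eq_mul_inv]
    rw [hval, ← hpow]
    apply mul_le_mul_of_nonneg_left _ (by positivity)
    exact inv_anti₀ h10 (by linarith)
  have hTsum : Summable T := by
    apply Summable.of_nonneg_of_le hTnn hTle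
    exact ((hcol 0).summable.congr (fun m => by simp only [hF_def]; rw [hsym m 0])).mul_right _
  have hFsum : Summable (Function.uncurry F) := by
    apply (summable_prod_of_nonneg ?_).mpr
    constructor
    · exact fun m => (hrow m).summable
    · apply hTsum.congr
      intro m
      exact ((hrow m).tsum_eq).symm
    · intro p
      have := (he p.1).le
      simp only [hF_def, Function.uncurry]
      positivity
  -- swap
  have hswap : (∑' n, T n) = ∑' j, G j := by
    calc (∑' n, T n) = ∑' m, ∑' j, F m j := by
          apply tsum_congr; intro m; exact ((hrow m).tsum_eq).symm
    _ = ∑' j, ∑' m, F m j :=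
          (Summable.tsum_comm' hFsum (fun m => (hrow m).summable) (fun j => (hcol j).summable)).symm
    _ = ∑' j, G j := by
          apply tsum_congr; intro j; exact (hcol j).tsum_eq
  -- the Basel series
  set H : ℕ → ℝ := fun j => 1 / (((j:ℝ) + 1) * ρ)^2 with hH_def
  have hH : HasSum H (π^2 / (6 * ρ^2)) := by
    have h0 := (hasSum_nat_add_iff' 1).mpr hasSum_zeta_two
    simp only [Finset.sum_range_one, Nat.cast_zero] at h0
    norm_num at h0
    have h1 := h0.mul_left (1/ρ^2)
    convert h1 using 1
    · rfl
    · funext j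
      rw [hH_def]
      have hj : ((j:ℝ)+1) ≠ 0 := by positivity
      push_cast
      field_simp
    · field_simp
  -- pointwise comparison
  have hu : ∀ j : ℕ, (0:ℝ) < ((j:ℝ)+1) * ρ := by intro j; positivity
  have he_eq : ∀ j : ℕ, e j = Real.exp (-(((j:ℝ)+1) * ρ)) := by
    intro j; rw [he_def]; simp only [neg_mul]
  have hGH : ∀ j, G j ≤ H j := by
    intro j
    rw [hG_def, hH_def]
    simp only [he_eq j]
    exact key_lower (hu j)
  have hHG4 : ∀ j, H j - G j ≤ 4 / (1 + ((j:ℝ)+1)*ρ)^2 := by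
    intro j
    rw [hG_def, hH_def]
    simp only [he_eq j]
    exact key_upper (hu j)
  -- telescoping bound
  set tele : ℕ → ℝ := fun j => 1/(1+(j:ℝ)*ρ) - 1/(1+((j:ℝ)+1)*ρ) with htele_def
  have htele_nn : ∀ j, 0 ≤ tele j := by
    intro j
    rw [htele_def]
    simp only [sub_nonneg]
    apply one_div_le_one_div_of_le (by positivity)
    nlinarith [Nat.cast_nonneg (α := ℝ) j]
  have htele : HasSum tele 1 := by
    rw [hasSum_iff_tendsto_nat_of_nonneg htele_nn]
    have hps : ∀ n : ℕ, ∑ j ∈ Finset.range n, tele j = 1 - 1/(1+(n:ℝ)*ρ) := by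
      intro n
      have h2 : ∑ j ∈ Finset.range n, tele j
          = ∑ j ∈ Finset.range n,
            ((fun i : ℕ => 1/(1+(i:ℝ)*ρ)) j - (fun i : ℕ => 1/(1+(i:ℝ)*ρ)) (j+1)) := by
        apply Finset.sum_congr rfl
        intro j _
        rw [htele_def]
        push_cast
        ring
      rw [h2, Finset.sum_range_sub' (fun i : ℕ => 1/(1+(i:ℝ)*ρ)) n]
      norm_num
    simp only [hps]
    have hb : Filter.Tendsto (fun n : ℕ => 1 + (n:ℝ)*ρ) Filter.atTop Filter.atTop := by
      apply Filter.tendsto_atTop_add_const_left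
      exact Filter.Tendsto.atTop_mul_const hρ tendsto_natCast_atTop_atTop
    have h1 : Filter.Tendsto (fun n : ℕ => 1/(1+(n:ℝ)*ρ)) Filter.atTop (nhds 0) := by
      simp only [one_div]
      exact hb.inv_tendsto_atTop
    simpa using Filter.Tendsto.const_sub 1 h1
  have hGnn : ∀ j, 0 ≤ G j := by
    intro j
    have h1j : (0:ℝ) < 1 - e j := by linarith [he1 j]
    rw [hG_def]
    positivity
  have hGsum : Summable G := Summable.of_nonneg_of_le hGnn hGH hH.summable
  have hbound : ∀ j, H j - G j ≤ (4/ρ) * tele j := by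
    intro j
    refine le_trans (hHG4 j) ?_
    have hA : (0:ℝ) < 1 + (j:ℝ)*ρ := by positivity
    have hB : (0:ℝ) < 1 + ((j:ℝ)+1)*ρ := by positivity
    have ht : tele j = ρ / ((1+(j:ℝ)*ρ) * (1+((j:ℝ)+1)*ρ)) := by
      rw [htele_def]
      field_simp
      ring
    rw [ht]
    have heq : 4/ρ * (ρ / ((1+(j:ℝ)*ρ) * (1+((j:ℝ)+1)*ρ)))
        = 4 / ((1+(j:ℝ)*ρ) * (1+((j:ℝ)+1)*ρ)) := by
      field_simp
    rw [heq]
    rw [div_eq_mul_one_div (4:ℝ), div_eq_mul_one_div (4:ℝ)]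
    apply mul_le_mul_of_nonneg_left _ (by norm_num)
    apply one_div_le_one_div_of_le (by positivity)
    nlinarith
  -- final assembly
  rw [hswap, ← hH.tsum_eq]
  have hle : ∑' j, G j ≤ ∑' j, H j := Summable.tsum_le_tsum hGH hGsum hH.summable
  rw [abs_of_nonpos (by linarith)]
  have hsub : ∑' j, (H j - G j) = ∑' j, H j - ∑' j, G j := Summable.tsum_sub hH.summable hGsum
  rw [neg_sub, ← hsub]
  have h2 : ∑' j, (H j - G j) ≤ ∑' j, (4/ρ) * tele j :=
    Summable.tsum_le_tsum hbound (hH.summable.sub hGsum) (htele.summable.mul_left _)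
  have h3 : ∑' j, (4/ρ) * tele j = 4/ρ := by
    rw [(htele.mul_left (4/ρ)).tsum_eq, mul_one]
  linarith
end

section
/- For 0 < t < 1 with ρ := -log t, the sum ∑_{n≥1} n² t^n/(1-t^n)² equals π²/(3ρ³) + O(1/ρ²) as ρ → 0⁺. -/
open Real MeasureTheory Set Filter Asymptotics

noncomputable def ff (ρ x : ℝ) : ℝ := x^2 * Real.exp (-ρ*x) / (1 - Real.exp (-ρ*x))^2

lemma ff_nonneg (ρ x : ℝ) : 0 ≤ ff ρ x := by unfold ff; positivity

lemma one_sub_exp_neg (u : ℝ) : 1 - Real.exp (-u) = Real.exp (-(u/2)) * (2 * Real.sinh (u/2)) := by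
  rw [Real.sinh_eq]
  have h1 : Real.exp (-(u/2)) * Real.exp (u/2) = 1 := by rw [← Real.exp_add]; norm_num
  have h2 : Real.exp (-(u/2)) * Real.exp (-(u/2)) = Real.exp (-u) := by
    rw [← Real.exp_add]; ring_nf
  linear_combination h2 - h1

lemma ff_eq_sinh {ρ x : ℝ} (h : Real.sinh (ρ*x/2) ≠ 0) :
    ff ρ x = x^2 / (4 * Real.sinh (ρ*x/2)^2) := by
  have hu : (1 - Real.exp (-(ρ*x)))^2 = Real.exp (-(ρ*x)) * (4 * Real.sinh (ρ*x/2)^2) := by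
    rw [one_sub_exp_neg (ρ*x), mul_pow, sq (Real.exp _), ← Real.exp_add]
    ring_nf
  unfold ff
  rw [show -ρ*x = -(ρ*x) by ring, hu]
  rw [div_eq_div_iff (by positivity) (by positivity)]
  ring

lemma convexOn_sinh' : ConvexOn ℝ (Ici 0) Real.sinh := by
  apply convexOn_of_deriv2_nonneg (convex_Ici 0) Real.continuous_sinh.continuousOn
    Real.differentiable_sinh.differentiableOn
  · rw [Real.deriv_sinh]
    exact Real.differentiable_cosh.differentiableOn
  · intro x hx
    have : deriv^[2] Real.sinh = Real.sinh := by
      ext y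
      simp [Function.iterate_succ, Real.deriv_sinh, Real.deriv_cosh]
    rw [this]
    rw [interior_Ici] at hx
    exact (Real.sinh_pos_iff.2 hx).le

lemma sinh_slope {a b : ℝ} (h0 : 0 < a) (hab : a ≤ b) :
    b * Real.sinh a ≤ a * Real.sinh b := by
  have hb : 0 < b := h0.trans_le hab
  have w1 : (0:ℝ) ≤ a/b := by positivity
  have w2 : (0:ℝ) ≤ 1 - a/b := by
    have : a/b ≤ 1 := (div_le_one hb).2 hab
    linarith
  have w3 : a/b + (1 - a/b) = 1 := by ring
  have key := convexOn_sinh'.2 (mem_Ici.2 hb.le) (self_mem_Ici (a := (0:ℝ))) w1 w2 w3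
  simp only [smul_eq_mul, mul_zero, add_zero, Real.sinh_zero] at key
  rw [div_mul_cancel₀ _ hb.ne'] at key
  calc b * Real.sinh a ≤ b * (a/b * Real.sinh b) := by
        apply mul_le_mul_of_nonneg_left _ hb.le
        simpa using key
    _ = a * Real.sinh b := by field_simp

lemma sinh_ne {ρ x : ℝ} (hρ : 0 < ρ) (hx : 0 < x) : Real.sinh (ρ*x/2) ≠ 0 :=
  (Real.sinh_pos_iff.2 (by positivity)).ne'

lemma ff_le {ρ x : ℝ} (hρ : 0 < ρ) (hx : 0 < x) : ff ρ x ≤ 1/ρ^2 := by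
  rw [ff_eq_sinh (sinh_ne hρ hx)]
  have hs : ρ*x/2 ≤ Real.sinh (ρ*x/2) := Real.self_le_sinh_iff.2 (by positivity)
  have hsp : 0 < Real.sinh (ρ*x/2) := Real.sinh_pos_iff.2 (by positivity)
  rw [div_le_div_iff₀ (by positivity) (by positivity)]
  nlinarith [mul_self_le_mul_self (by positivity : (0:ℝ) ≤ ρ*x/2) hs]

lemma ff_anti {ρ x y : ℝ} (hρ : 0 < ρ) (hx : 0 < x) (hxy : x ≤ y) : ff ρ y ≤ ff ρ x := by
  have hy : 0 < y := hx.trans_le hxy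
  rw [ff_eq_sinh (sinh_ne hρ hx), ff_eq_sinh (sinh_ne hρ hy)]
  have hsx : 0 < Real.sinh (ρ*x/2) := Real.sinh_pos_iff.2 (by positivity)
  have hsy : 0 < Real.sinh (ρ*y/2) := Real.sinh_pos_iff.2 (by positivity)
  have key := sinh_slope (a := ρ*x/2) (b := ρ*y/2) (by positivity)
    (by nlinarith)
  have key2 : y * Real.sinh (ρ*x/2) ≤ x * Real.sinh (ρ*y/2) := by nlinarith
  rw [div_le_div_iff₀ (by positivity) (by positivity)]
  nlinarith [mul_pos hy hsx, mul_pos hx hsy]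

noncomputable def FF (ρ x : ℝ) : ℝ := if x = 0 then 1/ρ^2 else ff ρ x

lemma FF_anti {ρ : ℝ} (hρ : 0 < ρ) : AntitoneOn (FF ρ) (Ici 0) := by
  intro a ha b hb hab
  rcases eq_or_lt_of_le (mem_Ici.1 ha) with h0 | h0
  · rcases eq_or_lt_of_le (mem_Ici.1 hb) with h1 | h1
    · simp [FF, ← h0, ← h1]
    · simp only [FF, if_neg h1.ne', ← h0, if_pos rfl]
      exact ff_le hρ h1
  · have hb0 : 0 < b := h0.trans_le hab
    simp only [FF, if_neg h0.ne', if_neg hb0.ne']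
    exact ff_anti hρ h0 hab

lemma integrable_pow2_exp {r : ℝ} (hr : 0 < r) :
    IntegrableOn (fun x : ℝ => x^2 * Real.exp (-r*x)) (Ioi 0) := by
  have h := integrableOn_rpow_mul_exp_neg_mul_rpow (p := 1) (s := 2) (b := r)
    (by norm_num) one_pos hr
  apply h.congr_fun _ measurableSet_Ioi
  intro x _
  simp only [Real.rpow_one, Real.rpow_two]

lemma integral_pow2_exp {r : ℝ} (hr : 0 < r) :
    ∫ x in Ioi 0, x^2 * Real.exp (-r*x) = 2/r^3 := by
  have h := integral_rpow_mul_exp_neg_mul_Ioi (a := 3) (r := r) (by norm_num) hr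
  rw [show ((3:ℝ)) = ((3:ℕ):ℝ) by norm_num] at h
  rw [Real.rpow_natCast] at h
  have hg : Real.Gamma ((3:ℕ):ℝ) = 2 := by
    rw [show (((3:ℕ):ℝ)) = (2:ℕ)+1 by norm_num, Real.Gamma_nat_eq_factorial]; norm_num
  rw [hg] at h
  rw [show (∫ x in Ioi 0, x^2 * Real.exp (-r*x))
      = ∫ t in Ioi 0, t ^ (((3:ℕ):ℝ) - 1) * Real.exp (-(r*t)) from ?_, h]
  · field_simp
  · apply setIntegral_congr_fun measurableSet_Ioi
    intro x _
    show x^2 * Real.exp (-r*x) = x ^ ((((3:ℕ):ℝ)) - 1) * Real.exp (-(r*x))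
    rw [show ((((3:ℕ):ℝ)) - 1) = ((2:ℕ):ℝ) by norm_num, Real.rpow_natCast]
    ring_nf

noncomputable def G (ρ : ℝ) (n : ℕ) (x : ℝ) : ℝ :=
  ((n:ℝ)+1) * (x^2 * Real.exp (-(((n:ℝ)+1)*ρ)*x))

lemma ff_eq_tsum {ρ x : ℝ} (hρ : 0 < ρ) (hx : 0 < x) : ff ρ x = ∑' n : ℕ, G ρ n x := by
  set q := Real.exp (-ρ*x) with hqdef
  have hq0 : 0 < q := Real.exp_pos _
  have hq1 : q < 1 := by
    rw [hqdef, Real.exp_lt_one_iff]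
    nlinarith
  have hnorm : ‖q‖ < 1 := by rw [Real.norm_eq_abs, abs_of_pos hq0]; exact hq1
  have hsum : ∑' n : ℕ, (n:ℝ) * q^n = q / (1-q)^2 :=
    tsum_coe_mul_geometric_of_norm_lt_one hnorm
  have s0 : Summable (fun n : ℕ => (n:ℝ) * q^n) := by
    have := summable_pow_mul_geometric_of_norm_lt_one (R := ℝ) 1 hnorm
    simpa using this
  have hshift : ∑' n : ℕ, (n:ℝ) * q^n = ∑' n : ℕ, ((n:ℝ)+1) * q^(n+1) := by
    rw [s0.tsum_eq_zero_add]
    push_cast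
    simp
  have key : ff ρ x = ∑' n : ℕ, x^2 * (((n:ℝ)+1) * q^(n+1)) := by
    rw [tsum_mul_left, ← hshift, hsum]
    unfold ff
    rw [← hqdef]
    ring
  rw [key]
  apply tsum_congr
  intro n
  unfold G
  rw [hqdef, ← Real.exp_nat_mul]
  rw [show (((n+1:ℕ)):ℝ) * (-ρ*x) = (-(((n:ℝ)+1)*ρ))*x by push_cast; ring]
  ring

lemma exp_lt_one' {ρ x : ℝ} (hρ : 0 < ρ) (hx : 0 < x) : Real.exp (-ρ*x) < 1 := by
  rw [Real.exp_lt_one_iff]; nlinarith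

lemma cont_ff {ρ : ℝ} (hρ : 0 < ρ) : ContinuousOn (ff ρ) (Ioi 0) := by
  unfold ff
  apply ContinuousOn.div
  · fun_prop
  · fun_prop
  · intro x hx
    have := exp_lt_one' hρ (mem_Ioi.1 hx)
    exact pow_ne_zero 2 (sub_pos.2 this).ne'

lemma exp_tendsto {ρ : ℝ} (hρ : 0 < ρ) :
    Tendsto (fun x : ℝ => Real.exp (-ρ*x)) atTop (nhds 0) := by
  apply Real.tendsto_exp_atBot.comp
  exact tendsto_id.const_mul_atTop_of_neg (by linarith)

lemma bigO_ff {ρ : ℝ} (hρ : 0 < ρ) :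
    (ff ρ) =O[atTop] (fun x => Real.exp (-(ρ/2)*x)) := by
  have h1 : Tendsto (fun x : ℝ => x^2 * Real.exp (-(ρ/2)*x)) atTop (nhds 0) := by
    have := tendsto_rpow_mul_exp_neg_mul_atTop_nhds_zero 2 (ρ/2) (by positivity)
    apply this.congr'
    filter_upwards [eventually_gt_atTop (0:ℝ)] with x hx
    rw [Real.rpow_two]
  have h2 : Tendsto (fun x : ℝ => (1 - Real.exp (-ρ*x))⁻¹^2) atTop (nhds 1) := by
    have hc : Tendsto (fun y : ℝ => (1 - y)⁻¹^2) (nhds 0) (nhds 1) := by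
      have : ContinuousAt (fun y : ℝ => (1 - y)⁻¹^2) 0 := by
        apply ContinuousAt.pow
        apply ContinuousAt.inv₀ (by fun_prop)
        norm_num
      simpa using this.tendsto
    exact hc.comp (exp_tendsto hρ)
  apply IsLittleO.isBigO
  rw [isLittleO_iff_tendsto (fun x h => absurd h (Real.exp_ne_zero _))]
  have := h1.mul h2
  rw [mul_one] at this
  apply this.congr'
  filter_upwards [eventually_gt_atTop (0:ℝ)] with x hx
  have hlt := exp_lt_one' hρ hx
  have hne : (1 - Real.exp (-ρ*x)) ≠ 0 := (sub_pos.2 hlt).ne'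
  unfold ff
  have hee : Real.exp (-ρ*x) = Real.exp (-(ρ/2)*x) * Real.exp (-(ρ/2)*x) := by
    rw [← Real.exp_add]; ring_nf
  rw [div_div, eq_div_iff (mul_ne_zero (pow_ne_zero 2 hne) (Real.exp_ne_zero _))]
  have hBB : (1 - Real.exp (-ρ*x))⁻¹^2 * (1 - Real.exp (-ρ*x))^2 = 1 := by
    rw [← mul_pow, inv_mul_cancel₀ hne, one_pow]
  linear_combination (x^2 * Real.exp (-(ρ/2)*x) * Real.exp (-(ρ/2)*x)) * hBB - x^2 * hee

lemma integrable_ff {ρ : ℝ} (hρ : 0 < ρ) : IntegrableOn (ff ρ) (Ioi 0) := by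
  rw [show Ioi (0:ℝ) = Ioc 0 1 ∪ Ioi 1 from (Ioc_union_Ioi_eq_Ioi zero_le_one).symm]
  apply IntegrableOn.union
  · apply Integrable.mono' (g := fun _ => 1/ρ^2)
    · exact integrableOn_const (by simp)
    · exact ((cont_ff hρ).mono Ioc_subset_Ioi_self).aestronglyMeasurable measurableSet_Ioc
    · filter_upwards [ae_restrict_mem measurableSet_Ioc] with x hx
      rw [Real.norm_eq_abs, abs_of_nonneg (ff_nonneg ρ x)]
      exact ff_le hρ hx.1
  · exact integrable_of_isBigO_exp_neg (by positivity : (0:ℝ) < ρ/2)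
      ((cont_ff hρ).mono (fun x hx => mem_Ioi.2 (lt_of_lt_of_le one_pos hx)))
      (bigO_ff hρ)

lemma basel_shift : ∑' n : ℕ, 1/((n:ℝ)+1)^2 = π^2/6 := by
  have h := hasSum_zeta_two
  have hs := h.summable
  have := h.tsum_eq
  rw [hs.tsum_eq_zero_add] at this
  norm_num at this
  rw [← this]
  apply tsum_congr
  intro n
  push_cast
  ring

lemma summable_inv_sq_shift : Summable (fun n : ℕ => 1/((n:ℝ)+1)^2) := by
  have hs := hasSum_zeta_two.summable
  have := (summable_nat_add_iff (f := fun n : ℕ => 1/(n:ℝ)^2) 1).2 hs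
  apply this.congr
  intro n
  push_cast
  ring

lemma G_pos {ρ : ℝ} (hρ : 0 < ρ) (n : ℕ) : 0 < ((n:ℝ)+1)*ρ := by positivity

lemma integral_G {ρ : ℝ} (hρ : 0 < ρ) (n : ℕ) :
    ∫ x in Ioi 0, G ρ n x = 2/(((n:ℝ)+1)^2 * ρ^3) := by
  unfold G
  rw [integral_const_mul, integral_pow2_exp (G_pos hρ n)]
  have h1 : ((n:ℝ)+1) ≠ 0 := by positivity
  have h2 : ρ ≠ 0 := hρ.ne'
  field_simp

lemma integral_ff {ρ : ℝ} (hρ : 0 < ρ) :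
    ∫ x in Ioi 0, ff ρ x = π^2/(3*ρ^3) := by
  have hGint : ∀ n : ℕ, Integrable (G ρ n) (volume.restrict (Ioi 0)) := by
    intro n
    exact (integrable_pow2_exp (G_pos hρ n)).const_mul _
  have hGnn : ∀ n : ℕ, ∀ x ∈ Ioi (0:ℝ), 0 ≤ G ρ n x := by
    intro n x _
    unfold G; positivity
  have hnormint : ∀ n : ℕ, ∫ a in Ioi (0:ℝ), ‖G ρ n a‖ = 2/(((n:ℝ)+1)^2 * ρ^3) := by
    intro n
    rw [← integral_G hρ n]
    apply setIntegral_congr_fun measurableSet_Ioi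
    intro x hx
    exact Real.norm_of_nonneg (hGnn n x hx)
  have hsum : Summable (fun n : ℕ => ∫ a in Ioi (0:ℝ), ‖G ρ n a‖) := by
    rw [funext hnormint]
    have : (fun n : ℕ => 2/(((n:ℝ)+1)^2 * ρ^3)) = (fun n : ℕ => (2/ρ^3) * (1/((n:ℝ)+1)^2)) := by
      funext n; field_simp
    rw [this]
    exact summable_inv_sq_shift.mul_left _
  have swap := MeasureTheory.integral_tsum_of_summable_integral_norm hGint hsum
  have heq : ∫ a in Ioi (0:ℝ), (∑' n : ℕ, G ρ n a) = ∫ a in Ioi (0:ℝ), ff ρ a :=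
    setIntegral_congr_fun measurableSet_Ioi (fun x hx => (ff_eq_tsum hρ hx).symm)
  rw [← heq, ← swap]
  calc ∑' n : ℕ, ∫ a in Ioi (0:ℝ), G ρ n a
      = ∑' n : ℕ, (2/ρ^3) * (1/((n:ℝ)+1)^2) := by
        apply tsum_congr; intro n
        rw [integral_G hρ n]
        field_simp
    _ = (2/ρ^3) * (π^2/6) := by rw [tsum_mul_left, basel_shift]
    _ = π^2/(3*ρ^3) := by ring

lemma summable_shift2 {r : ℝ} (h0 : 0 ≤ r) (h1 : r < 1) :
    Summable (fun n : ℕ => ((n:ℝ)+1)^2 * r^(n+1)) := by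
  have hnorm : ‖r‖ < 1 := by rwa [Real.norm_eq_abs, abs_of_nonneg h0]
  have hs := summable_pow_mul_geometric_of_norm_lt_one (R := ℝ) 2 hnorm
  have := (summable_nat_add_iff (f := fun n : ℕ => (n:ℝ)^2 * r^n) 1).2 hs
  apply this.congr
  intro n
  push_cast
  ring

lemma exp_pow {ρ : ℝ} (n : ℕ) : Real.exp (-ρ*((n:ℝ)+1)) = (Real.exp (-ρ))^(n+1) := by
  rw [← Real.exp_nat_mul]
  congr 1
  push_cast
  ring

lemma summable_S {ρ : ℝ} (hρ : 0 < ρ) : Summable (fun n : ℕ => ff ρ ((n:ℝ)+1)) := by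
  set r := Real.exp (-ρ) with hr
  have h0 : 0 < r := Real.exp_pos _
  have h1 : r < 1 := by rw [hr, Real.exp_lt_one_iff]; linarith
  apply Summable.of_nonneg_of_le (f := fun n : ℕ => (1/(1-r)^2) * (((n:ℝ)+1)^2 * r^(n+1)))
    (fun n => ff_nonneg ρ _)
  · intro n
    unfold ff
    rw [exp_pow n]
    have hq1 : r^(n+1) ≤ r := by
      calc r^(n+1) ≤ r^1 := pow_le_pow_of_le_one h0.le h1.le (by omega)
      _ = r := pow_one r
    have hq0 : 0 < r^(n+1) := by positivity
    have hd : 0 < 1 - r := by linarith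
    have hdn : 1 - r ≤ 1 - r^(n+1) := by linarith
    rw [div_eq_mul_one_div, mul_comm (1/(1-r)^2)]
    apply mul_le_mul_of_nonneg_left _ (by positivity)
    exact one_div_le_one_div_of_le (by positivity) (pow_le_pow_left₀ hd.le hdn 2)
  · exact (summable_shift2 h0.le h1).mul_left _

lemma interval_FF_eq {ρ : ℝ} (N : ℕ) :
    ∫ x in (0:ℝ)..((N:ℕ):ℝ), FF ρ x = ∫ x in Ioc (0:ℝ) ((N:ℕ):ℝ), ff ρ x := by
  rw [intervalIntegral.integral_of_le (by positivity)]
  apply setIntegral_congr_fun measurableSet_Ioc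
  intro x hx
  unfold FF
  rw [if_neg hx.1.ne']

lemma sum_range_le {ρ : ℝ} (hρ : 0 < ρ) (N : ℕ) :
    ∑ i ∈ Finset.range N, ff ρ ((i:ℝ)+1) ≤ π^2/(3*ρ^3) := by
  have anti := (FF_anti hρ).mono (Icc_subset_Ici_self : Icc (0:ℝ) (0+(N:ℕ)) ⊆ Ici 0)
  have h := anti.sum_le_integral
  have hL : ∑ i ∈ Finset.range N, FF ρ (0 + ((i:ℕ)+1:ℕ)) = ∑ i ∈ Finset.range N, ff ρ ((i:ℝ)+1) := by
    apply Finset.sum_congr rfl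
    intro i _
    have h2 : ((0:ℝ) + (((i:ℕ)+1:ℕ):ℝ)) = (i:ℝ)+1 := by push_cast; ring
    rw [h2]
    unfold FF
    rw [if_neg (by positivity)]
  rw [hL] at h
  refine h.trans ?_
  rw [show ((0:ℝ)+(N:ℕ):ℝ) = ((N:ℕ):ℝ) by ring, interval_FF_eq N]
  rw [← integral_ff hρ]
  apply setIntegral_mono_set (integrable_ff hρ)
  · filter_upwards [ae_restrict_mem measurableSet_Ioi] with x _
    exact ff_nonneg ρ x
  · exact (Ioc_subset_Ioi_self).eventuallyLE

lemma lower_bound {ρ : ℝ} (hρ : 0 < ρ) :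
    π^2/(3*ρ^3) ≤ 1/ρ^2 + ∑' n : ℕ, ff ρ ((n:ℝ)+1) := by
  set S := ∑' n : ℕ, ff ρ ((n:ℝ)+1) with hS
  have hSsum := summable_S hρ
  have hSnn : 0 ≤ S := tsum_nonneg (fun n => ff_nonneg ρ _)
  have bound : ∀ M : ℕ, ∫ x in (0:ℝ)..((M:ℕ):ℝ), ff ρ x ≤ 1/ρ^2 + S := by
    intro M
    have hIoc : ∫ x in (0:ℝ)..((M:ℕ):ℝ), ff ρ x = ∫ x in (0:ℝ)..((M:ℕ):ℝ), FF ρ x := by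
      rw [interval_FF_eq M, intervalIntegral.integral_of_le (by positivity)]
    rw [hIoc]
    have anti := (FF_anti hρ).mono (Icc_subset_Ici_self : Icc (0:ℝ) (0+(M:ℕ)) ⊆ Ici 0)
    have h := anti.integral_le_sum
    rw [show ((0:ℝ)+(M:ℕ):ℝ) = ((M:ℕ):ℝ) by ring] at h
    refine h.trans ?_
    cases M with
    | zero => simp [FF]; positivity
    | succ K =>
      rw [Finset.sum_range_succ']
      have h0 : FF ρ (0 + ((0:ℕ):ℝ)) = 1/ρ^2 := by norm_num [FF]
      rw [h0]
      have hterm : ∀ i ∈ Finset.range K, FF ρ (0 + (((i+1:ℕ)):ℝ)) = ff ρ ((i:ℝ)+1) := by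
        intro i _
        have h2 : ((0:ℝ) + (((i+1:ℕ)):ℝ)) = (i:ℝ)+1 := by push_cast; ring
        rw [h2]
        unfold FF
        rw [if_neg (by positivity)]
      rw [Finset.sum_congr rfl hterm]
      have : ∑ i ∈ Finset.range K, ff ρ ((i:ℝ)+1) ≤ S :=
        Summable.sum_le_tsum _ (fun n _ => ff_nonneg ρ _) hSsum
      linarith
  have tends : Tendsto (fun M : ℕ => ∫ x in (0:ℝ)..((M:ℕ):ℝ), ff ρ x) atTop
      (nhds (π^2/(3*ρ^3))) := by
    rw [← integral_ff hρ]
    exact intervalIntegral_tendsto_integral_Ioi 0 (integrable_ff hρ)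
      tendsto_natCast_atTop_atTop
  exact le_of_tendsto tends (Eventually.of_forall bound)

/-- `∑_{n≥1} n² t^n/(1-t^n)² = π²/(3ρ³) + O(1/ρ²)` with `t = e^{-ρ}` as `ρ → 0⁺`. -/
theorem stmt_15 :
    ∃ C > (0:ℝ), ∃ ρ₀ > (0:ℝ), ∀ ρ : ℝ, 0 < ρ → ρ < ρ₀ →
      |(∑' n : ℕ, ((n:ℝ) + 1)^2 * Real.exp (-((n:ℝ) + 1) * ρ) /
          (1 - Real.exp (-((n:ℝ) + 1) * ρ))^2) - π^2 / (3 * ρ^3)| ≤ C / ρ^2 := by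
  refine ⟨1, one_pos, 1, one_pos, fun ρ hρ _ => ?_⟩
  have hterm : (∑' n : ℕ, ((n:ℝ) + 1)^2 * Real.exp (-((n:ℝ) + 1) * ρ) /
      (1 - Real.exp (-((n:ℝ) + 1) * ρ))^2) = ∑' n : ℕ, ff ρ ((n:ℝ)+1) := by
    apply tsum_congr
    intro n
    unfold ff
    rw [show -ρ*((n:ℝ)+1) = -((n:ℝ)+1)*ρ by ring]
  rw [hterm]
  set S := ∑' n : ℕ, ff ρ ((n:ℝ)+1) with hSdef
  have hup : S ≤ π^2/(3*ρ^3) :=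
    Real.tsum_le_of_sum_range_le (fun n => ff_nonneg ρ _) (sum_range_le hρ)
  have hlo := lower_bound hρ
  rw [abs_le]
  constructor
  · nlinarith [sq_nonneg ρ]
  · have : (0:ℝ) ≤ 1/ρ^2 := by positivity
    linarith
end
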